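/- arXiv:2512.08176 — 5 statements merged into one kernel-verified Lean document; each statement's English description precedes it below -/
import Mathlib

section
/- The functional L is coordinate l-smooth on ℝ^p × L²(P) with l = l₀ + 1/γ: for all θ, θ̃ ∈ ℝ^p and T, T̃ ∈ L²(P), (1) ‖∂_θL(θ̃,T) − ∂_θL(θ,T)‖ ≤ l₀‖θ̃ − θ‖; (2) ‖∂_θL(θ,T̃) − ∂_θL(θ,T)‖ ≤ l₀‖T̃ − T‖_{L²(P)}; (3) ‖∂_TL(θ̃,T) − ∂_TL(θ,T)‖_{L²(P)} ≤ l₀‖θ̃ − θ‖; (4) ‖∂_TL(θ,T̃) − ∂_TL(θ,T)‖_{L²(P)} ≤ (l₀ + 1/γ)‖T̃ − T‖_{L²(P)}. -/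
open MeasureTheory

noncomputable section

/-- Coordinate smoothness of
`L(θ,T) = E_{x∼P}[ℓ(θ,T(x)) − ‖T(x)−x‖²/(2γ)]` on `ℝ^p × L²(P)`, where
`∂_θL(θ,T) = E_{x∼P}[∂_θℓ(θ,T(x))]` and `∂_TL(θ,T)(x) = ∂_vℓ(θ,T(x)) − (1/γ)(T(x)−x)`:
the four coordinate-Lipschitz inequalities hold with constants `l₀, l₀, l₀, l₀ + 1/γ`. -/
theorem coordinate_smoothness_of_L
    {d p : ℕ} (P : Measure (EuclideanSpace ℝ (Fin d))) [IsProbabilityMeasure P]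
    (hP2 : Integrable (fun x => ‖x‖ ^ 2) P)
    (ℓ : EuclideanSpace ℝ (Fin p) → EuclideanSpace ℝ (Fin d) → ℝ)
    (gθ : EuclideanSpace ℝ (Fin p) → EuclideanSpace ℝ (Fin d) → EuclideanSpace ℝ (Fin p))
    (gv : EuclideanSpace ℝ (Fin p) → EuclideanSpace ℝ (Fin d) → EuclideanSpace ℝ (Fin d))
    (l₀ γ : ℝ) (hl₀ : 0 ≤ l₀) (hγ : 0 < γ)
    (hgθ : ∀ θ v, HasGradientAt (fun θ' => ℓ θ' v) (gθ θ v) θ)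
    (hgv : ∀ θ v, HasGradientAt (fun v' => ℓ θ v') (gv θ v) v)
    (hsmooth : ∀ θ v θ' v',
      Real.sqrt (‖gθ θ' v' - gθ θ v‖ ^ 2 + ‖gv θ' v' - gv θ v‖ ^ 2)
        ≤ l₀ * Real.sqrt (‖θ' - θ‖ ^ 2 + ‖v' - v‖ ^ 2))
    (θ θ' : EuclideanSpace ℝ (Fin p))
    (T T' : EuclideanSpace ℝ (Fin d) → EuclideanSpace ℝ (Fin d))
    (hT : MemLp T 2 P) (hT' : MemLp T' 2 P) :
    ‖(∫ x, gθ θ' (T x) ∂P) - (∫ x, gθ θ (T x) ∂P)‖ ≤ l₀ * ‖θ' - θ‖ ∧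
    ‖(∫ x, gθ θ (T' x) ∂P) - (∫ x, gθ θ (T x) ∂P)‖
        ≤ l₀ * Real.sqrt (∫ x, ‖T' x - T x‖ ^ 2 ∂P) ∧
    Real.sqrt (∫ x, ‖(gv θ' (T x) - γ⁻¹ • (T x - x)) - (gv θ (T x) - γ⁻¹ • (T x - x))‖ ^ 2 ∂P)
        ≤ l₀ * ‖θ' - θ‖ ∧
    Real.sqrt (∫ x, ‖(gv θ (T' x) - γ⁻¹ • (T' x - x)) - (gv θ (T x) - γ⁻¹ • (T x - x))‖ ^ 2 ∂P)
        ≤ (l₀ + γ⁻¹) * Real.sqrt (∫ x, ‖T' x - T x‖ ^ 2 ∂P) := by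
  -- a basic fact: each component is dominated by the Euclidean combination
  have key : ∀ a b c : ℝ, 0 ≤ a → Real.sqrt (a ^ 2 + b ^ 2) ≤ c → a ≤ c := by
    intro a b c ha h
    have h1 : a ^ 2 ≤ a ^ 2 + b ^ 2 := le_add_of_nonneg_right (sq_nonneg b)
    have h2 := Real.sqrt_le_sqrt h1
    rw [Real.sqrt_sq ha] at h2
    linarith
  have key2 : ∀ a b c : ℝ, 0 ≤ b → Real.sqrt (a ^ 2 + b ^ 2) ≤ c → b ≤ c := by
    intro a b c hb h
    rw [add_comm] at h
    exact key b a c hb h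
  -- pointwise Lipschitz bounds
  have hgθθ : ∀ (θ₁ θ₂ : EuclideanSpace ℝ (Fin p)) v,
      ‖gθ θ₂ v - gθ θ₁ v‖ ≤ l₀ * ‖θ₂ - θ₁‖ := by
    intro θ₁ θ₂ v
    have h := hsmooth θ₁ v θ₂ v
    simp only [sub_self, norm_zero, ne_eq, OfNat.ofNat_ne_zero, not_false_eq_true, zero_pow,
      add_zero, Real.sqrt_sq (norm_nonneg _)] at h
    exact key _ _ _ (norm_nonneg _) h
  have hgθv : ∀ θ₀ (v v' : EuclideanSpace ℝ (Fin d)),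
      ‖gθ θ₀ v' - gθ θ₀ v‖ ≤ l₀ * ‖v' - v‖ := by
    intro θ₀ v v'
    have h := hsmooth θ₀ v θ₀ v'
    simp only [sub_self, norm_zero, ne_eq, OfNat.ofNat_ne_zero, not_false_eq_true, zero_pow,
      zero_add, Real.sqrt_sq (norm_nonneg _)] at h
    exact key _ _ _ (norm_nonneg _) h
  have hgvθ : ∀ (θ₁ θ₂ : EuclideanSpace ℝ (Fin p)) v,
      ‖gv θ₂ v - gv θ₁ v‖ ≤ l₀ * ‖θ₂ - θ₁‖ := by
    intro θ₁ θ₂ v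
    have h := hsmooth θ₁ v θ₂ v
    simp only [sub_self, norm_zero, ne_eq, OfNat.ofNat_ne_zero, not_false_eq_true, zero_pow,
      add_zero, Real.sqrt_sq (norm_nonneg _)] at h
    exact key2 _ _ _ (norm_nonneg _) h
  have hgvv : ∀ θ₀ (v v' : EuclideanSpace ℝ (Fin d)),
      ‖gv θ₀ v' - gv θ₀ v‖ ≤ l₀ * ‖v' - v‖ := by
    intro θ₀ v v'
    have h := hsmooth θ₀ v θ₀ v'
    simp only [sub_self, norm_zero, ne_eq, OfNat.ofNat_ne_zero, not_false_eq_true, zero_pow,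
      zero_add, Real.sqrt_sq (norm_nonneg _)] at h
    exact key2 _ _ _ (norm_nonneg _) h
  -- integrability of gθ θ₀ ∘ S for S ∈ L²
  have hint : ∀ (θ₀ : EuclideanSpace ℝ (Fin p)) (S : EuclideanSpace ℝ (Fin d) →
      EuclideanSpace ℝ (Fin d)), MemLp S 2 P → Integrable (fun x => gθ θ₀ (S x)) P := by
    intro θ₀ S hS
    have hlip : LipschitzWith l₀.toNNReal (gθ θ₀) := by
      apply LipschitzWith.of_dist_le_mul
      intro a b
      rw [dist_eq_norm, dist_eq_norm, Real.coe_toNNReal _ hl₀]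
      exact hgθv θ₀ b a
    have hm : AEStronglyMeasurable (fun x => gθ θ₀ (S x)) P :=
      hlip.continuous.comp_aestronglyMeasurable hS.aestronglyMeasurable
    refine Integrable.mono'
      ((integrable_const ‖gθ θ₀ 0‖).add (((hS.integrable one_le_two).norm).const_mul l₀)) hm ?_
    filter_upwards with x
    have h1 : ‖gθ θ₀ (S x) - gθ θ₀ 0‖ ≤ l₀ * ‖S x - 0‖ := hgθv θ₀ 0 (S x)
    have h2 := norm_sub_norm_le (gθ θ₀ (S x)) (gθ θ₀ 0)
    simp only [sub_zero] at h1
    simp only [Pi.add_apply]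
    linarith
  have hμ : P.real Set.univ = 1 := by simp
  refine ⟨?_, ?_, ?_, ?_⟩
  · -- (1)
    rw [← integral_sub (hint θ' T hT) (hint θ T hT)]
    calc ‖∫ x, (gθ θ' (T x) - gθ θ (T x)) ∂P‖
        ≤ ∫ x, ‖gθ θ' (T x) - gθ θ (T x)‖ ∂P := norm_integral_le_integral_norm _
      _ ≤ ∫ _x, l₀ * ‖θ' - θ‖ ∂P := by
          refine integral_mono_of_nonneg (Filter.Eventually.of_forall fun x => norm_nonneg _)
            (integrable_const _) (Filter.Eventually.of_forall fun x => hgθθ θ θ' (T x))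
      _ = l₀ * ‖θ' - θ‖ := by rw [integral_const, hμ, one_smul]
  · -- (2)
    have hFi : Integrable (fun x => ‖T' x - T x‖) P :=
      ((hT'.sub hT).integrable one_le_two).norm
    have hF2 : MemLp (fun x => ‖T' x - T x‖) 2 P := (hT'.sub hT).norm
    have hCS : ∫ x, ‖T' x - T x‖ ∂P ≤ Real.sqrt (∫ x, ‖T' x - T x‖ ^ 2 ∂P) := by
      have hvar := ProbabilityTheory.variance_nonneg (fun x => ‖T' x - T x‖) P
      rw [ProbabilityTheory.variance_eq_sub hF2] at hvar
      simp only [Pi.pow_apply] at hvar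
      refine (Real.le_sqrt (integral_nonneg fun x => norm_nonneg _)
        ?_).mpr (by linarith)
      exact integral_nonneg fun x => sq_nonneg _
    rw [← integral_sub (hint θ T' hT') (hint θ T hT)]
    calc ‖∫ x, (gθ θ (T' x) - gθ θ (T x)) ∂P‖
        ≤ ∫ x, ‖gθ θ (T' x) - gθ θ (T x)‖ ∂P := norm_integral_le_integral_norm _
      _ ≤ ∫ x, l₀ * ‖T' x - T x‖ ∂P := by
          refine integral_mono_of_nonneg (Filter.Eventually.of_forall fun x => norm_nonneg _)
            (hFi.const_mul l₀) (Filter.Eventually.of_forall fun x => hgθv θ (T x) (T' x))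
      _ = l₀ * ∫ x, ‖T' x - T x‖ ∂P := integral_const_mul _ _
      _ ≤ l₀ * Real.sqrt (∫ x, ‖T' x - T x‖ ^ 2 ∂P) := by
          exact mul_le_mul_of_nonneg_left hCS hl₀
  · -- (3)
    simp only [sub_sub_sub_cancel_right]
    have h1 : (∫ x, ‖gv θ' (T x) - gv θ (T x)‖ ^ 2 ∂P)
        ≤ ∫ _x, (l₀ * ‖θ' - θ‖) ^ 2 ∂P := by
      refine integral_mono_of_nonneg (Filter.Eventually.of_forall fun x => sq_nonneg _)
        (integrable_const _) (Filter.Eventually.of_forall fun x => ?_)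
      exact pow_le_pow_left₀ (norm_nonneg _) (hgvθ θ θ' (T x)) 2
    calc Real.sqrt (∫ x, ‖gv θ' (T x) - gv θ (T x)‖ ^ 2 ∂P)
        ≤ Real.sqrt (∫ _x, (l₀ * ‖θ' - θ‖) ^ 2 ∂P) := Real.sqrt_le_sqrt h1
      _ = l₀ * ‖θ' - θ‖ := by
          rw [integral_const, hμ, one_smul, Real.sqrt_sq (mul_nonneg hl₀ (norm_nonneg _))]
  · -- (4)
    set c : ℝ := l₀ + γ⁻¹ with hc
    have hc0 : 0 ≤ c := add_nonneg hl₀ (inv_nonneg.mpr hγ.le)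
    have hbd : ∀ x, ‖(gv θ (T' x) - γ⁻¹ • (T' x - x)) - (gv θ (T x) - γ⁻¹ • (T x - x))‖
        ≤ c * ‖T' x - T x‖ := by
      intro x
      have heq : (gv θ (T' x) - γ⁻¹ • (T' x - x)) - (gv θ (T x) - γ⁻¹ • (T x - x))
          = (gv θ (T' x) - gv θ (T x)) - γ⁻¹ • (T' x - T x) := by
        rw [smul_sub, smul_sub, smul_sub]
        abel
      rw [heq]
      calc ‖(gv θ (T' x) - gv θ (T x)) - γ⁻¹ • (T' x - T x)‖
          ≤ ‖gv θ (T' x) - gv θ (T x)‖ + ‖γ⁻¹ • (T' x - T x)‖ := norm_sub_le _ _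
        _ ≤ l₀ * ‖T' x - T x‖ + γ⁻¹ * ‖T' x - T x‖ := by
            rw [norm_smul, Real.norm_eq_abs, abs_of_nonneg (inv_nonneg.mpr hγ.le)]
            exact add_le_add_left (hgvv θ (T x) (T' x)) _
        _ = c * ‖T' x - T x‖ := by ring
    have hsqint : Integrable (fun x => c ^ 2 * ‖T' x - T x‖ ^ 2) P :=
      ((hT'.sub hT).norm.integrable_sq).const_mul _
    have h1 : (∫ x, ‖(gv θ (T' x) - γ⁻¹ • (T' x - x)) - (gv θ (T x) - γ⁻¹ • (T x - x))‖ ^ 2 ∂P)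
        ≤ ∫ x, c ^ 2 * ‖T' x - T x‖ ^ 2 ∂P := by
      refine integral_mono_of_nonneg (Filter.Eventually.of_forall fun x => sq_nonneg _)
        hsqint (Filter.Eventually.of_forall fun x => ?_)
      have := pow_le_pow_left₀ (norm_nonneg _) (hbd x) 2
      calc ‖(gv θ (T' x) - γ⁻¹ • (T' x - x)) - (gv θ (T x) - γ⁻¹ • (T x - x))‖ ^ 2
          ≤ (c * ‖T' x - T x‖) ^ 2 := this
        _ = c ^ 2 * ‖T' x - T x‖ ^ 2 := by ring
    calc Real.sqrt (∫ x,
          ‖(gv θ (T' x) - γ⁻¹ • (T' x - x)) - (gv θ (T x) - γ⁻¹ • (T x - x))‖ ^ 2 ∂P)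
        ≤ Real.sqrt (∫ x, c ^ 2 * ‖T' x - T x‖ ^ 2 ∂P) := Real.sqrt_le_sqrt h1
      _ = Real.sqrt (c ^ 2 * ∫ x, ‖T' x - T x‖ ^ 2 ∂P) := by rw [integral_const_mul]
      _ = c * Real.sqrt (∫ x, ‖T' x - T x‖ ^ 2 ∂P) := by
          rw [Real.sqrt_mul (sq_nonneg c), Real.sqrt_sq hc0]
end
end

section
/- Under the μ-PL-in-T assumption, for each θ ∈ ℝ^p the maximizer map x ↦ v*(θ;x) is (γμ)⁻¹-Lipschitz on a set of full P-measure, i.e., there is a measurable set A with P(A) = 1 such that ‖v*(θ;x̃) − v*(θ;x)‖ ≤ (γμ)⁻¹‖x̃ − x‖ for all x, x̃ ∈ A; consequently T*(θ) given by T*(θ)(x) = v*(θ;x) belongs to L²(P). -/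
open MeasureTheory

noncomputable section

open MeasureTheory InnerProductSpace Filter Topology
set_option maxHeartbeats 1000000

variable {E : Type*} [NormedAddCommGroup E] [InnerProductSpace ℝ E] [CompleteSpace E]

local notation "⟪" x ", " y "⟫" => @inner ℝ _ _ x y

lemma grad_zero_at_max {f : E → ℝ} {g v : E} (hgv : HasGradientAt f g v)
    (h : ∀ w, f w ≤ f v) : g = 0 := by
  have hmx : IsLocalMax f v := Filter.Eventually.of_forall h
  have h0 := hmx.hasFDerivAt_eq_zero hgv.hasFDerivAt
  have : (toDual ℝ E) g = 0 := h0
  simpa using (toDual ℝ E).map_eq_zero_iff.mp this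

/-- Descent lemma for functions with Lipschitz gradient. -/
lemma descent_lemma (f : E → ℝ) (g : E → E) (hg : ∀ v, HasGradientAt f (g v) v)
    (L : ℝ) (hL : 0 ≤ L) (hLip : ∀ u v, ‖g u - g v‖ ≤ L * ‖u - v‖)
    (v w : E) : f v + ⟪g v, w - v⟫ - L / 2 * ‖w - v‖ ^ 2 ≤ f w := by
  set d := w - v with hd
  have hcg : Continuous g := by
    have : LipschitzWith (Real.toNNReal L) g :=
      LipschitzWith.of_dist_le_mul (fun x y => by
        rw [dist_eq_norm, dist_eq_norm, Real.coe_toNNReal L hL]; exact hLip x y)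
    exact this.continuous
  have hline : ∀ t : ℝ, HasDerivAt (fun t : ℝ => v + t • d) d t := fun t => by
    simpa using ((hasDerivAt_id t).smul_const d).const_add v
  have hφ : ∀ t : ℝ, HasDerivAt (fun t : ℝ => f (v + t • d)) ⟪g (v + t • d), d⟫ t := by
    intro t
    have h1 := (hg (v + t • d)).hasFDerivAt.comp_hasDerivAt t (hline t)
    simpa [toDual_apply_apply, Function.comp_def] using h1
  have hcont : Continuous fun t : ℝ => ⟪g (v + t • d), d⟫ := by
    exact (hcg.comp (by continuity)).inner continuous_const
  have hftc : ∫ t in (0:ℝ)..1, ⟪g (v + t • d), d⟫ = f (v + (1:ℝ) • d) - f (v + (0:ℝ) • d) :=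
    intervalIntegral.integral_eq_sub_of_hasDerivAt (fun t _ => hφ t)
      (hcont.intervalIntegrable 0 1)
  have hlow : ∀ t ∈ Set.Icc (0:ℝ) 1, ⟪g v, d⟫ - L * ‖d‖ ^ 2 * t ≤ ⟪g (v + t • d), d⟫ := by
    intro t ht
    have h1 : ⟪g (v + t • d), d⟫ - ⟪g v, d⟫ = ⟪g (v + t • d) - g v, d⟫ := by
      rw [inner_sub_left]
    have h2 : ‖g (v + t • d) - g v‖ ≤ L * (t * ‖d‖) := by
      have := hLip (v + t • d) v
      simpa [norm_smul, abs_of_nonneg ht.1, mul_assoc] using this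
    have h3 : |⟪g (v + t • d) - g v, d⟫| ≤ L * (t * ‖d‖) * ‖d‖ :=
      le_trans (abs_real_inner_le_norm _ _)
        (mul_le_mul_of_nonneg_right h2 (norm_nonneg d))
    nlinarith [abs_le.mp h3, sq_nonneg ‖d‖]
  have hmono : ∫ t in (0:ℝ)..1, (⟪g v, d⟫ - L * ‖d‖ ^ 2 * t) ≤
      ∫ t in (0:ℝ)..1, ⟪g (v + t • d), d⟫ := by
    apply intervalIntegral.integral_mono_on zero_le_one
      ((by continuity : Continuous fun t : ℝ => ⟪g v, d⟫ - L * ‖d‖ ^ 2 * t).intervalIntegrable 0 1)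
      (hcont.intervalIntegrable 0 1) hlow
  have hcalc : ∫ t in (0:ℝ)..1, (⟪g v, d⟫ - L * ‖d‖ ^ 2 * t) = ⟪g v, d⟫ - L / 2 * ‖d‖ ^ 2 := by
    rw [intervalIntegral.integral_sub (intervalIntegrable_const)
      ((by continuity : Continuous fun t : ℝ => L * ‖d‖ ^ 2 * t).intervalIntegrable 0 1)]
    rw [intervalIntegral.integral_const_mul, integral_id]
    simp
    ring
  rw [hcalc] at hmono
  rw [hftc] at hmono
  simp only [one_smul, zero_smul, add_zero] at hmono
  have hvd : v + d = w := by rw [hd]; abel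
  rw [hvd] at hmono
  linarith [hmono]

lemma quadratic_growth (f : E → ℝ) (g : E → E) (hg : ∀ v, HasGradientAt f (g v) v)
    (L : ℝ) (hL : 0 < L) (hLip : ∀ u v, ‖g u - g v‖ ≤ L * ‖u - v‖)
    (μ : ℝ) (hμ : 0 < μ) (vb : E)
    (hmaxb : ∀ v, f v ≤ f vb)
    (huni : ∀ v, (∀ w, f w ≤ f v) → v = vb)
    (hPL : ∀ v, μ * (f vb - f v) ≤ (1/2) * ‖g v‖ ^ 2)
    (v₀ : E) : μ / 2 * ‖v₀ - vb‖ ^ 2 ≤ f vb - f v₀ := by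
  have claim : ∀ η : ℝ, 0 < η → L * η ≤ 1 → 2 * μ * η ≤ 1 →
      (1 - L * η / 2) * Real.sqrt (μ / 2) * ‖v₀ - vb‖ ≤ Real.sqrt (f vb - f v₀) := by
    intro η hη hη1 hη2
    set c : ℝ := η * (1 - L * η / 2) with hc_def
    have hhalf : (1:ℝ)/2 ≤ 1 - L * η / 2 := by nlinarith
    have hc_pos : 0 < c := by nlinarith
    set K' : ℝ := (1 - L * η / 2) * Real.sqrt (μ / 2) with hK'_def
    have hsqrt_pos : 0 < Real.sqrt (μ / 2) := Real.sqrt_pos.mpr (by positivity)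
    have hK'_pos : 0 < K' := by rw [hK'_def]; nlinarith
    -- the gradient ascent sequence
    set seq : ℕ → E := fun n => Nat.rec v₀ (fun _ vk => vk + η • g vk) n with hseq_def
    have hseq : ∀ k, seq (k + 1) = seq k + η • g (seq k) := fun k => rfl
    set Δ : ℕ → ℝ := fun k => f vb - f (seq k) with hΔ_def
    have hΔnn : ∀ k, 0 ≤ Δ k := fun k => by simp [hΔ_def, hmaxb (seq k)]
    have hdesc : ∀ k, Δ (k + 1) ≤ Δ k - c * ‖g (seq k)‖ ^ 2 := by
      intro k
      have h := descent_lemma f g hg L hL.le hLip (seq k) (seq k + η • g (seq k))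
      have h1 : ⟪g (seq k), seq k + η • g (seq k) - seq k⟫ = η * ‖g (seq k)‖ ^ 2 := by
        simp [real_inner_smul_right, real_inner_self_eq_norm_sq]
      have h2 : ‖seq k + η • g (seq k) - seq k‖ ^ 2 = η ^ 2 * ‖g (seq k)‖ ^ 2 := by
        simp [norm_smul, abs_of_pos hη, mul_pow]
      rw [h1, h2] at h
      simp only [hΔ_def, hc_def]
      rw [hseq k]
      nlinarith [h]
    have hPLk : ∀ k, 2 * μ * Δ k ≤ ‖g (seq k)‖ ^ 2 := by
      intro k
      have := hPL (seq k)
      simp only [hΔ_def]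
      linarith
    set r : ℝ := 1 - 2 * μ * c with hr_def
    have hr0 : 0 ≤ r := by rw [hr_def, hc_def]; nlinarith
    have hr1 : r < 1 := by rw [hr_def]; nlinarith
    have hcontr : ∀ k, Δ (k + 1) ≤ r * Δ k := by
      intro k
      have h1 := hdesc k
      have h2 := hPLk k
      have h3 := hΔnn k
      rw [hr_def]
      nlinarith
    have hgeo : ∀ k, Δ k ≤ r ^ k * Δ 0 := by
      intro k
      induction k with
      | zero => simp
      | succ n ih =>
        calc Δ (n + 1) ≤ r * Δ n := hcontr n
        _ ≤ r * (r ^ n * Δ 0) := by nlinarith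
        _ = r ^ (n + 1) * Δ 0 := by ring
    have hΔmono : ∀ k, Δ (k + 1) ≤ Δ k := by
      intro k
      have h1 := hdesc k
      nlinarith [sq_nonneg ‖g (seq k)‖, hc_pos]
    have hs2μ : Real.sqrt (2 * μ) = 2 * Real.sqrt (μ / 2) := by
      rw [show (2 * μ : ℝ) = 2 ^ 2 * (μ / 2) by ring,
        Real.sqrt_mul (by positivity) , Real.sqrt_sq (by norm_num : (0:ℝ) ≤ 2)]
    -- key step bound
    have hstep : ∀ k, K' * ‖seq (k + 1) - seq k‖ ≤ Real.sqrt (Δ k) - Real.sqrt (Δ (k + 1)) := by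
      intro k
      by_cases hΔ0 : Δ k = 0
      · have hfk : f (seq k) = f vb := by
          have := hΔ0; simp only [hΔ_def] at this; linarith
        have hgk : g (seq k) = 0 := grad_zero_at_max (hg (seq k))
          (fun w => by rw [hfk]; exact hmaxb w)
        have hΔ1 : Δ (k + 1) = 0 :=
          le_antisymm (by simpa [hΔ0] using hcontr k) (hΔnn (k + 1))
        rw [hseq k, hgk, hΔ0, hΔ1]
        simp
      · have hΔpos : 0 < Δ k := lt_of_le_of_ne (hΔnn k) (Ne.symm hΔ0)
        set G := ‖g (seq k)‖ with hG_def
        set a := Real.sqrt (Δ k) with ha_def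
        set b := Real.sqrt (Δ (k + 1)) with hb_def
        have ha2 : a ^ 2 = Δ k := Real.sq_sqrt (hΔnn k)
        have hb2 : b ^ 2 = Δ (k + 1) := Real.sq_sqrt (hΔnn (k + 1))
        have hapos : 0 < a := Real.sqrt_pos.mpr hΔpos
        have hbnn : 0 ≤ b := Real.sqrt_nonneg _
        have hba : b ≤ a := Real.sqrt_le_sqrt (hΔmono k)
        have hGnn : 0 ≤ G := norm_nonneg _
        have h2μa : Real.sqrt (2 * μ) * a ≤ G := by
          have h1 : (Real.sqrt (2 * μ) * a) ^ 2 = 2 * μ * Δ k := by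
            rw [mul_pow, Real.sq_sqrt (by positivity), ha2]
          have h2 := hPLk k
          nlinarith [Real.sqrt_nonneg (2 * μ), hapos.le]
        have hnorm_step : ‖seq (k + 1) - seq k‖ = η * G := by
          rw [hseq k]
          simp [norm_smul, abs_of_pos hη, hG_def]
        rw [hnorm_step]
        have hdk := hdesc k
        -- (a - b) * (a + b) = Δ k - Δ (k+1) ≥ c * G^2
        have hfact : (a - b) * (a + b) = Δ k - Δ (k + 1) := by
          rw [← ha2, ← hb2]; ring
        have hkey : c * (Real.sqrt (2 * μ) * a) * G ≤ (a - b) * (2 * a) := by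
          have h1 : c * (Real.sqrt (2 * μ) * a) * G ≤ c * (G * G) := by
            nlinarith [mul_le_mul_of_nonneg_right h2μa hGnn]
          have h2 : c * (G * G) ≤ (a - b) * (a + b) := by rw [hfact]; nlinarith [hdk]
          have h3 : (a - b) * (a + b) ≤ (a - b) * (2 * a) := by nlinarith
          linarith
        have hgoal : K' * (η * G) * (2 * a) ≤ (a - b) * (2 * a) := by
          have : K' * (η * G) * (2 * a) = c * (Real.sqrt (2 * μ) * a) * G := by
            rw [hK'_def, hc_def, hs2μ]; ring
          rw [this]; exact hkey
        exact le_of_mul_le_mul_right hgoal (by positivity)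
    -- telescoping path bound
    have hpath : ∀ m n, m ≤ n → K' * ‖seq n - seq m‖ ≤ Real.sqrt (Δ m) - Real.sqrt (Δ n) := by
      intro m n hmn
      induction n, hmn using Nat.le_induction with
      | base => simp
      | succ n hmn ih =>
        have h1 : ‖seq (n + 1) - seq m‖ ≤ ‖seq (n + 1) - seq n‖ + ‖seq n - seq m‖ := by
          simpa using norm_sub_le_norm_sub_add_norm_sub (seq (n+1)) (seq n) (seq m)
        have h2 := hstep n
        nlinarith [mul_le_mul_of_nonneg_left h1 hK'_pos.le]
    have hΔtend : Tendsto Δ atTop (𝓝 0) := by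
      apply squeeze_zero hΔnn hgeo
      simpa using (tendsto_pow_atTop_nhds_zero_of_lt_one hr0 hr1).mul_const (Δ 0)
    have hsqtend : Tendsto (fun n => Real.sqrt (Δ n)) atTop (𝓝 0) := by
      have := (Real.continuous_sqrt.tendsto 0).comp hΔtend
      simpa [Function.comp_def] using this
    have hcauchy : CauchySeq seq := by
      apply cauchySeq_of_le_tendsto_0 (fun N => 2 * K'⁻¹ * Real.sqrt (Δ N))
      · intro n m N hn hm
        have h1 := hpath N n hn
        have h2 := hpath N m hm
        have h3 : dist (seq n) (seq m) ≤ ‖seq n - seq N‖ + ‖seq m - seq N‖ := by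
          rw [dist_eq_norm]
          simpa [norm_sub_rev (seq N) (seq m)] using
            norm_sub_le_norm_sub_add_norm_sub (seq n) (seq N) (seq m)
        have h4 : K' * ‖seq n - seq N‖ ≤ Real.sqrt (Δ N) := by
          nlinarith [Real.sqrt_nonneg (Δ n)]
        have h5 : K' * ‖seq m - seq N‖ ≤ Real.sqrt (Δ N) := by
          nlinarith [Real.sqrt_nonneg (Δ m)]
        rw [show 2 * K'⁻¹ * Real.sqrt (Δ N) = K'⁻¹ * Real.sqrt (Δ N) + K'⁻¹ * Real.sqrt (Δ N) by ring]
        have h6 : ‖seq n - seq N‖ ≤ K'⁻¹ * Real.sqrt (Δ N) := by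
          rw [le_inv_mul_iff₀ hK'_pos]; linarith
        have h7 : ‖seq m - seq N‖ ≤ K'⁻¹ * Real.sqrt (Δ N) := by
          rw [le_inv_mul_iff₀ hK'_pos]; linarith
        linarith
      · have : Tendsto (fun N => 2 * K'⁻¹ * Real.sqrt (Δ N)) atTop (𝓝 (2 * K'⁻¹ * 0)) :=
          hsqtend.const_mul _
        simpa using this
    obtain ⟨vl, hvl⟩ := cauchySeq_tendsto_of_complete hcauchy
    have hfcont : Continuous f :=
      continuous_iff_continuousAt.2 fun v => (hg v).continuousAt
    have hfl : Tendsto (fun n => f (seq n)) atTop (𝓝 (f vl)) :=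
      (hfcont.continuousAt.tendsto).comp hvl
    have hfl' : Tendsto (fun n => f (seq n)) atTop (𝓝 (f vb)) := by
      have : Tendsto (fun n => f vb - Δ n) atTop (𝓝 (f vb - 0)) :=
        tendsto_const_nhds.sub hΔtend
      simpa [hΔ_def] using this
    have hflb : f vl = f vb := tendsto_nhds_unique hfl hfl'
    have hvlb : vl = vb := huni vl (fun w => by rw [hflb]; exact hmaxb w)
    have hlim : Tendsto (fun n => K' * ‖seq n - v₀‖) atTop (𝓝 (K' * ‖vl - v₀‖)) := by
      exact (((continuous_const.mul ((continuous_id.sub continuous_const).norm)).tendsto vl).comp hvl)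
    have hbound : ∀ n, K' * ‖seq n - v₀‖ ≤ Real.sqrt (f vb - f v₀) := by
      intro n
      have h1 := hpath 0 n (Nat.zero_le n)
      have h2 : Real.sqrt (Δ 0) = Real.sqrt (f vb - f v₀) := by norm_num [hΔ_def, hseq_def]
      have := Real.sqrt_nonneg (Δ n)
      calc K' * ‖seq n - v₀‖ = K' * ‖seq n - seq 0‖ := by norm_num [hseq_def]
      _ ≤ Real.sqrt (Δ 0) - Real.sqrt (Δ n) := h1
      _ ≤ Real.sqrt (f vb - f v₀) := by rw [h2] at *; linarith
    have hfinal : K' * ‖vl - v₀‖ ≤ Real.sqrt (f vb - f v₀) :=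
      le_of_tendsto hlim (Filter.Eventually.of_forall hbound)
    rw [hvlb, norm_sub_rev] at hfinal
    exact hfinal
  -- let η → 0
  have hmain : Real.sqrt (μ / 2) * ‖v₀ - vb‖ ≤ Real.sqrt (f vb - f v₀) := by
    set η₀ : ℝ := min (1 / L) (1 / (2 * μ)) with hη₀
    have hη₀pos : 0 < η₀ := lt_min (by positivity) (by positivity)
    have hev : ∀ᶠ η in 𝓝[>] (0:ℝ),
        (1 - L * η / 2) * Real.sqrt (μ / 2) * ‖v₀ - vb‖ ≤ Real.sqrt (f vb - f v₀) := by
      filter_upwards [Ioc_mem_nhdsGT_of_mem (Set.mem_Ico.mpr ⟨le_refl 0, hη₀pos⟩)] with η hη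
      obtain ⟨hη1, hη2⟩ := hη
      have hL1 : L * η ≤ 1 := by
        have : η ≤ 1 / L := le_trans hη2 (min_le_left _ _)
        rw [le_div_iff₀ hL] at this; linarith
      have hμ1 : 2 * μ * η ≤ 1 := by
        have : η ≤ 1 / (2 * μ) := le_trans hη2 (min_le_right _ _)
        rw [le_div_iff₀ (by positivity)] at this; linarith
      exact claim η hη1 hL1 hμ1
    have htend : Tendsto (fun η : ℝ => (1 - L * η / 2) * Real.sqrt (μ / 2) * ‖v₀ - vb‖)
        (𝓝[>] (0:ℝ)) (𝓝 ((1 - L * 0 / 2) * Real.sqrt (μ / 2) * ‖v₀ - vb‖)) := by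
      exact ((by continuity : Continuous fun η : ℝ =>
        (1 - L * η / 2) * Real.sqrt (μ / 2) * ‖v₀ - vb‖).tendsto 0).mono_left nhdsWithin_le_nhds
    have := le_of_tendsto htend hev
    simpa using this
  have h1 : (Real.sqrt (μ / 2) * ‖v₀ - vb‖) ^ 2 ≤ Real.sqrt (f vb - f v₀) ^ 2 := by
    apply sq_le_sq' _ hmain
    nlinarith [Real.sqrt_nonneg (μ/2), norm_nonneg (v₀ - vb), Real.sqrt_nonneg (f vb - f v₀)]
  rw [mul_pow, Real.sq_sqrt (by positivity : (0:ℝ) ≤ μ / 2),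
    Real.sq_sqrt (by linarith [hmaxb v₀] : (0:ℝ) ≤ f vb - f v₀)] at h1
  linarith

lemma hasGradientAt_quad (x v : E) {γ : ℝ} (hγ : 0 < γ) :
    HasGradientAt (fun w => ‖w - x‖ ^ 2 / (2 * γ)) (γ⁻¹ • (v - x)) v := by
  rw [hasGradientAt_iff_isLittleO]
  have heq : ∀ y : E, ‖y - x‖ ^ 2 / (2 * γ) - ‖v - x‖ ^ 2 / (2 * γ) - ⟪γ⁻¹ • (v - x), y - v⟫
      = (2 * γ)⁻¹ * ‖y - v‖ ^ 2 := by
    intro y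
    have h1 : ‖y - x‖ ^ 2 = ‖y - v‖ ^ 2 + 2 * ⟪y - v, v - x⟫ + ‖v - x‖ ^ 2 := by
      have := norm_add_sq_real (y - v) (v - x)
      simpa [sub_add_sub_cancel] using this
    have h2 : ⟪γ⁻¹ • (v - x), y - v⟫ = γ⁻¹ * ⟪v - x, y - v⟫ := real_inner_smul_left _ _ _
    rw [h2, h1, real_inner_comm (v - x) (y - v)]
    field_simp
    ring
  have : (fun y : E => (2 * γ)⁻¹ * ‖y - v‖ ^ 2) =o[𝓝 v] fun y => y - v := by
    rw [Asymptotics.isLittleO_iff]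
    intro c hc
    filter_upwards [Metric.ball_mem_nhds v (show (0:ℝ) < c * (2 * γ) by positivity)] with y hy
    rw [Metric.mem_ball, dist_eq_norm] at hy
    have h1 : (0:ℝ) ≤ ‖y - v‖ := norm_nonneg _
    have h2 : (0:ℝ) < (2 * γ)⁻¹ := by positivity
    have h3 : ‖(2 * γ)⁻¹ * ‖y - v‖ ^ 2‖ = (2 * γ)⁻¹ * ‖y - v‖ ^ 2 := by
      rw [Real.norm_eq_abs, abs_of_nonneg (by positivity)]
    rw [h3]
    have h4 : (2 * γ)⁻¹ * (2 * γ) = 1 := by field_simp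
    nlinarith [mul_le_mul_of_nonneg_left hy.le (mul_nonneg h2.le h1)]
  exact this.congr' (Filter.Eventually.of_forall fun y => (heq y).symm)
    (Filter.EventuallyEq.refl _ _)

lemma hasGradientAt_pen (f : E → ℝ) (gf : E → E) (x v : E) {γ : ℝ} (hγ : 0 < γ)
    (hf : HasGradientAt f (gf v) v) :
    HasGradientAt (fun w => f w - ‖w - x‖ ^ 2 / (2 * γ)) (gf v - γ⁻¹ • (v - x)) v := by
  have h1 := hf.hasFDerivAt.sub (hasGradientAt_quad x v hγ).hasFDerivAt
  rw [hasGradientAt_iff_hasFDerivAt, map_sub]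
  exact h1


/-- Under the μ-PL-in-T assumption, for each θ the maximizer map
`x ↦ v*(θ;x)` is `(γμ)⁻¹`-Lipschitz on a set of full P-measure, and consequently
`T*(θ) := v*(θ;·)` belongs to `L²(P)`. -/
theorem vstar_lipschitz_and_memLp
    {d p : ℕ} (P : Measure (EuclideanSpace ℝ (Fin d))) [IsProbabilityMeasure P]
    (hP2 : Integrable (fun x => ‖x‖ ^ 2) P)
    (ℓ : EuclideanSpace ℝ (Fin p) → EuclideanSpace ℝ (Fin d) → ℝ)
    (gθ : EuclideanSpace ℝ (Fin p) → EuclideanSpace ℝ (Fin d) → EuclideanSpace ℝ (Fin p))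
    (gv : EuclideanSpace ℝ (Fin p) → EuclideanSpace ℝ (Fin d) → EuclideanSpace ℝ (Fin d))
    (l₀ γ μ : ℝ) (hl₀ : 0 ≤ l₀) (hγ : 0 < γ) (hμ : 0 < μ)
    (hgθ : ∀ θ v, HasGradientAt (fun θ' => ℓ θ' v) (gθ θ v) θ)
    (hgv : ∀ θ v, HasGradientAt (fun v' => ℓ θ v') (gv θ v) v)
    (hsmooth : ∀ θ v θ' v',
      Real.sqrt (‖gθ θ' v' - gθ θ v‖ ^ 2 + ‖gv θ' v' - gv θ v‖ ^ 2)
        ≤ l₀ * Real.sqrt (‖θ' - θ‖ ^ 2 + ‖v' - v‖ ^ 2))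
    (vstar : EuclideanSpace ℝ (Fin p) → EuclideanSpace ℝ (Fin d) → EuclideanSpace ℝ (Fin d))
    (hmax : ∀ θ, ∀ᵐ x ∂P, ∀ v,
      ℓ θ v - ‖v - x‖ ^ 2 / (2 * γ) ≤ ℓ θ (vstar θ x) - ‖vstar θ x - x‖ ^ 2 / (2 * γ))
    (huniq : ∀ θ, ∀ᵐ x ∂P, ∀ v,
      (∀ w, ℓ θ w - ‖w - x‖ ^ 2 / (2 * γ) ≤ ℓ θ v - ‖v - x‖ ^ 2 / (2 * γ)) → v = vstar θ x)
    (hPL : ∀ θ, ∀ᵐ x ∂P, ∀ v,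
      μ * ((ℓ θ (vstar θ x) - ‖vstar θ x - x‖ ^ 2 / (2 * γ)) - (ℓ θ v - ‖v - x‖ ^ 2 / (2 * γ)))
        ≤ (1 / 2) * ‖gv θ v - γ⁻¹ • (v - x)‖ ^ 2)
    :
    ∀ θ, ∃ A : Set (EuclideanSpace ℝ (Fin d)), MeasurableSet A ∧ P A = 1 ∧
      (∀ x ∈ A, ∀ y ∈ A, ‖vstar θ y - vstar θ x‖ ≤ (γ * μ)⁻¹ * ‖y - x‖) ∧
      MemLp (vstar θ) 2 P := by
  intro θ
  set L : ℝ := l₀ + γ⁻¹ with hL_def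
  have hLpos : 0 < L := by have : (0:ℝ) < γ⁻¹ := inv_pos.mpr hγ; positivity
  have hgvLip : ∀ u v, ‖gv θ u - gv θ v‖ ≤ l₀ * ‖u - v‖ := by
    intro u v
    have h := hsmooth θ v θ u
    have h2 : ‖gv θ u - gv θ v‖ ≤
        Real.sqrt (‖gθ θ u - gθ θ v‖ ^ 2 + ‖gv θ u - gv θ v‖ ^ 2) := by
      calc ‖gv θ u - gv θ v‖ = Real.sqrt (‖gv θ u - gv θ v‖ ^ 2) :=
            (Real.sqrt_sq (norm_nonneg _)).symm
        _ ≤ Real.sqrt (‖gθ θ u - gθ θ v‖ ^ 2 + ‖gv θ u - gv θ v‖ ^ 2) :=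
            Real.sqrt_le_sqrt (by nlinarith [sq_nonneg ‖gθ θ u - gθ θ v‖])
    have h3 : Real.sqrt (‖θ - θ‖ ^ 2 + ‖u - v‖ ^ 2) = ‖u - v‖ := by
      simp [Real.sqrt_sq (norm_nonneg _)]
    rw [h3] at h
    exact le_trans h2 h
  -- the good set
  set S : Set (EuclideanSpace ℝ (Fin d)) := {x | (∀ v, ℓ θ v - ‖v - x‖ ^ 2 / (2 * γ) ≤
        ℓ θ (vstar θ x) - ‖vstar θ x - x‖ ^ 2 / (2 * γ)) ∧
      (∀ v, (∀ w, ℓ θ w - ‖w - x‖ ^ 2 / (2 * γ) ≤ ℓ θ v - ‖v - x‖ ^ 2 / (2 * γ)) →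
        v = vstar θ x) ∧
      (∀ v, μ * ((ℓ θ (vstar θ x) - ‖vstar θ x - x‖ ^ 2 / (2 * γ)) -
          (ℓ θ v - ‖v - x‖ ^ 2 / (2 * γ))) ≤
        (1 / 2) * ‖gv θ v - γ⁻¹ • (v - x)‖ ^ 2)} with hS_def
  have hae : ∀ᵐ x ∂P, x ∈ S := by
    filter_upwards [hmax θ, huniq θ, hPL θ] with x h1 h2 h3
    exact ⟨h1, h2, h3⟩
  set A : Set (EuclideanSpace ℝ (Fin d)) := (toMeasurable P Sᶜ)ᶜ with hA_def
  have hAmeas : MeasurableSet A := (measurableSet_toMeasurable P Sᶜ).compl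
  have hSc : P Sᶜ = 0 := by
    rw [ae_iff] at hae
    simpa [Set.compl_def] using hae
  have hPA : P A = 1 := by
    rw [hA_def, measure_compl (measurableSet_toMeasurable P Sᶜ) (measure_ne_top P _),
      measure_toMeasurable, hSc, measure_univ]
    simp
  have hAS : A ⊆ S := by
    intro x hx
    by_contra h
    exact hx (subset_toMeasurable P Sᶜ h)
  -- Lipschitz estimate on A
  have key : ∀ x ∈ A, ∀ y ∈ A, ‖vstar θ y - vstar θ x‖ ≤ (γ * μ)⁻¹ * ‖y - x‖ := by
    intro x hx y hy
    obtain ⟨hx1, hx2, hx3⟩ := hAS hx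
    obtain ⟨hy1, hy2, hy3⟩ := hAS hy
    have hgrad : ∀ u, HasGradientAt (fun w => ℓ θ w - ‖w - y‖ ^ 2 / (2 * γ))
        (gv θ u - γ⁻¹ • (u - y)) u :=
      fun u => hasGradientAt_pen (ℓ θ) (gv θ) y u hγ (hgv θ u)
    have hLipg : ∀ u v, ‖(gv θ u - γ⁻¹ • (u - y)) - (gv θ v - γ⁻¹ • (v - y))‖
        ≤ L * ‖u - v‖ := by
      intro u v
      have h1 : (gv θ u - γ⁻¹ • (u - y)) - (gv θ v - γ⁻¹ • (v - y))
          = (gv θ u - gv θ v) - γ⁻¹ • (u - v) := by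
        rw [smul_sub, smul_sub, smul_sub]
        abel
      rw [h1]
      calc ‖(gv θ u - gv θ v) - γ⁻¹ • (u - v)‖
          ≤ ‖gv θ u - gv θ v‖ + ‖γ⁻¹ • (u - v)‖ := norm_sub_le _ _
        _ ≤ l₀ * ‖u - v‖ + γ⁻¹ * ‖u - v‖ := by
            rw [norm_smul, Real.norm_eq_abs, abs_of_pos (inv_pos.mpr hγ)]
            exact add_le_add (hgvLip u v) le_rfl
        _ = L * ‖u - v‖ := by rw [hL_def]; ring
    have hQG := quadratic_growth (fun w => ℓ θ w - ‖w - y‖ ^ 2 / (2 * γ))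
      (fun u => gv θ u - γ⁻¹ • (u - y)) hgrad L hLpos hLipg μ hμ (vstar θ y)
      hy1 hy2 hy3 (vstar θ x)
    have hzero : gv θ (vstar θ x) = γ⁻¹ • (vstar θ x - x) := by
      have h := grad_zero_at_max
        (hasGradientAt_pen (ℓ θ) (gv θ) x (vstar θ x) hγ (hgv θ (vstar θ x)))
        (fun w => hx1 w)
      rwa [sub_eq_zero] at h
    have hgxnorm : ‖gv θ (vstar θ x) - γ⁻¹ • (vstar θ x - y)‖ = γ⁻¹ * ‖y - x‖ := by
      rw [hzero, ← smul_sub, show (vstar θ x - x) - (vstar θ x - y) = y - x by abel,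
        norm_smul, Real.norm_eq_abs, abs_of_pos (inv_pos.mpr hγ)]
    have hPLx := hy3 (vstar θ x)
    rw [hgxnorm] at hPLx
    have hQG' : μ / 2 * ‖vstar θ x - vstar θ y‖ ^ 2 ≤
        (ℓ θ (vstar θ y) - ‖vstar θ y - y‖ ^ 2 / (2 * γ)) -
        (ℓ θ (vstar θ x) - ‖vstar θ x - y‖ ^ 2 / (2 * γ)) := hQG
    have hsq : ‖vstar θ x - vstar θ y‖ ^ 2 ≤ ((γ * μ)⁻¹ * ‖y - x‖) ^ 2 := by
      have hinv : (γ * μ)⁻¹ = γ⁻¹ * μ⁻¹ := by rw [mul_inv]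
      rw [hinv]
      have h5 : (μ * ‖vstar θ x - vstar θ y‖) ^ 2 ≤ (γ⁻¹ * ‖y - x‖) ^ 2 := by
        nlinarith [mul_le_mul_of_nonneg_left hQG' hμ.le, hPLx]
      have h6 : ‖vstar θ x - vstar θ y‖ ^ 2 * μ ^ 2 ≤
          (γ⁻¹ * μ⁻¹ * ‖y - x‖) ^ 2 * μ ^ 2 := by
        have e1 : ‖vstar θ x - vstar θ y‖ ^ 2 * μ ^ 2
            = (μ * ‖vstar θ x - vstar θ y‖) ^ 2 := by ring
        have e2 : (γ⁻¹ * μ⁻¹ * ‖y - x‖) ^ 2 * μ ^ 2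
            = (γ⁻¹ * ‖y - x‖) ^ 2 * (μ⁻¹ * μ) ^ 2 := by ring
        rw [e1, e2, inv_mul_cancel₀ hμ.ne']
        simpa using h5
      exact le_of_mul_le_mul_right h6 (by positivity)
    rw [norm_sub_rev]
    have hmnn : 0 ≤ (γ * μ)⁻¹ * ‖y - x‖ := by positivity
    nlinarith [norm_nonneg (vstar θ x - vstar θ y)]
  refine ⟨A, hAmeas, hPA, key, ?_⟩
  -- Memℒp
  obtain ⟨x₀, hx₀⟩ : A.Nonempty := nonempty_of_measure_ne_zero (by rw [hPA]; norm_num)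
  have haeA : ∀ᵐ x ∂P, x ∈ A := by
    rw [ae_iff]
    have : {x | ¬ x ∈ A} = Aᶜ := rfl
    rw [this, measure_compl hAmeas (measure_ne_top P _), hPA, measure_univ]
    simp
  -- a.e. strong measurability via Lipschitz extension of coordinates
  have hcoord : ∀ (w : EuclideanSpace ℝ (Fin d)) (i : Fin d), |w i| ≤ ‖w‖ := by
    intro w i
    rw [EuclideanSpace.norm_eq]
    rw [show |w i| = Real.sqrt (|w i| ^ 2) from (Real.sqrt_sq (abs_nonneg _)).symm]
    apply Real.sqrt_le_sqrt
    have := Finset.single_le_sum (f := fun j => ‖w j‖ ^ 2)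
      (fun j _ => by positivity) (Finset.mem_univ i)
    simpa [Real.norm_eq_abs] using this
  have hLipOn : ∀ i : Fin d, LipschitzOnWith (Real.toNNReal ((γ * μ)⁻¹))
      (fun x => vstar θ x i) A := by
    intro i
    apply LipschitzOnWith.of_dist_le_mul
    intro x hx y hy
    have h1 : dist (vstar θ x i) (vstar θ y i) ≤ ‖vstar θ x - vstar θ y‖ := by
      rw [Real.dist_eq]
      have := hcoord (vstar θ x - vstar θ y) i
      simpa using this
    have h2 := key y hy x hx
    rw [Real.coe_toNNReal _ (by positivity : (0:ℝ) ≤ (γ * μ)⁻¹), dist_eq_norm]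
    calc dist (vstar θ x i) (vstar θ y i) ≤ ‖vstar θ x - vstar θ y‖ := h1
      _ ≤ (γ * μ)⁻¹ * ‖x - y‖ := h2
  choose gext hgextLip hgextEq using fun i : Fin d => (hLipOn i).extend_real
  set G : EuclideanSpace ℝ (Fin d) → EuclideanSpace ℝ (Fin d) := fun x => (EuclideanSpace.equiv (Fin d) ℝ).symm (fun i => gext i x)
    with hG_def
  have hGcont : Continuous G :=
    (EuclideanSpace.equiv (Fin d) ℝ).symm.continuous.comp
      (continuous_pi fun i => (hgextLip i).continuous)
  have hGA : ∀ x ∈ A, vstar θ x = G x := by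
    intro x hx
    ext i
    exact hgextEq i hx
  have haesm : AEStronglyMeasurable (vstar θ) P := by
    apply hGcont.aestronglyMeasurable.congr
    filter_upwards [haeA] with x hx
    exact (hGA x hx).symm
  -- dominating function
  have hid : MemLp (fun x : EuclideanSpace ℝ (Fin d) => x) 2 P :=
    (memLp_two_iff_integrable_sq_norm aestronglyMeasurable_id).mpr hP2
  have hb : MemLp (fun x : EuclideanSpace ℝ (Fin d) => ‖vstar θ x₀‖ + (γ * μ)⁻¹ * ‖x - x₀‖) 2 P := by
    have := (memLp_const (μ := P) (p := 2) (‖vstar θ x₀‖ : ℝ)).add (((hid.sub (memLp_const x₀)).norm).const_mul ((γ * μ)⁻¹))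
    exact this
  apply hb.of_le haesm
  filter_upwards [haeA] with x hx
  have h1 : ‖vstar θ x‖ ≤ ‖vstar θ x₀‖ + ‖vstar θ x - vstar θ x₀‖ := by
    have := norm_add_le (vstar θ x₀) (vstar θ x - vstar θ x₀)
    simpa using this
  have h2 := key x₀ hx₀ x hx
  have h3 : (0:ℝ) ≤ ‖vstar θ x₀‖ + (γ * μ)⁻¹ * ‖x - x₀‖ := by positivity
  rw [Real.norm_eq_abs, abs_of_nonneg h3]
  linarith
end
end

section
/- Under the μ-PL-in-T assumption, the map θ ↦ T*(θ) is κ-Lipschitz from ℝ^p to L²(P) with κ = l/μ and l = l₀ + 1/γ: ‖T*(θ̃) − T*(θ)‖_{L²(P)} ≤ κ‖θ̃ − θ‖ for all θ̃, θ ∈ ℝ^p. -/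
open MeasureTheory

noncomputable section

open InnerProductSpace Set

noncomputable section

variable {E : Type*} [NormedAddCommGroup E] [InnerProductSpace ℝ E] [CompleteSpace E]

local notation "⟪" x ", " y "⟫" => @inner ℝ _ _ x y

/-- Weak descent lemma: if the gradient is `L`-Lipschitz then
`f y ≥ f x + ⟪g x, y - x⟫ - L * ‖y - x‖²`. -/
lemma descent_aux (f : E → ℝ) (g : E → E) (L : ℝ) (hL : 0 ≤ L)
    (hg : ∀ v, HasGradientAt f (g v) v)
    (hLip : ∀ u v, ‖g u - g v‖ ≤ L * ‖u - v‖)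
    (x y : E) :
    f x + ⟪g x, y - x⟫ - L * ‖y - x‖ ^ 2 ≤ f y := by
  set φ : E → ℝ := fun v => f v - ⟪g x, v⟫ with hφ
  have hφd : ∀ z : E, HasFDerivAt φ (toDual ℝ E (g z - g x)) z := by
    intro z
    have h1 : HasFDerivAt f (toDual ℝ E (g z)) z := (hg z).hasFDerivAt
    have h2 : HasFDerivAt (fun v : E => ⟪g x, v⟫) (toDual ℝ E (g x)) z :=
      (toDual ℝ E (g x)).hasFDerivAt
    rw [map_sub]
    exact h1.sub h2
  have key : ‖φ y - φ x‖ ≤ (L * ‖y - x‖) * ‖y - x‖ := by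
    apply Convex.norm_image_sub_le_of_norm_hasFDerivWithin_le
      (f' := fun z => toDual ℝ E (g z - g x)) (s := segment ℝ x y)
      (fun z _ => (hφd z).hasFDerivWithinAt) ?_ (convex_segment x y)
      (left_mem_segment ℝ x y) (right_mem_segment ℝ x y)
    intro z hz
    rw [(toDual ℝ E).norm_map]
    rw [segment_eq_image' ℝ x y] at hz
    obtain ⟨t, ht, rfl⟩ := hz
    calc ‖g (x + t • (y - x)) - g x‖ ≤ L * ‖x + t • (y - x) - x‖ := hLip _ _
      _ ≤ L * ‖y - x‖ := by
          have : ‖x + t • (y - x) - x‖ = |t| * ‖y - x‖ := by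
            simp [norm_smul]
          rw [this, abs_of_nonneg ht.1]
          have h2 := ht.2
          nlinarith [mul_nonneg (mul_nonneg hL (norm_nonneg (y - x))) (sub_nonneg.mpr h2)]
  have h1 : φ x - φ y ≤ L * ‖y - x‖ ^ 2 := by
    have := (abs_le.mp (by simpa [Real.norm_eq_abs] using key)).1
    nlinarith
  have h2 : φ x - φ y = f x - f y + ⟪g x, y - x⟫ := by
    simp only [hφ, inner_sub_right]
    ring
  linarith [h2 ▸ h1]

set_option maxHeartbeats 1000000 in
lemma pl_dist_le (f : E → ℝ) (g : E → E) (L μ : ℝ) (hL : 0 < L) (hμ : 0 < μ)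
    (hg : ∀ v, HasGradientAt f (g v) v)
    (hLip : ∀ u v, ‖g u - g v‖ ≤ L * ‖u - v‖)
    (vs : E) (hmax : ∀ w, f w ≤ f vs)
    (huniq : ∀ v, (∀ w, f w ≤ f v) → v = vs)
    (hPL : ∀ v, μ * (f vs - f v) ≤ (1/2) * ‖g v‖ ^ 2)
    (η : ℝ) (hη0 : 0 < η) (hη1 : L * η < 1)
    (v : E) :
    ‖v - vs‖ ≤ (2 / ((1 - L * η) * Real.sqrt (2 * μ))) * Real.sqrt (f vs - f v) := by
  have hLη : 0 < 1 - L * η := by linarith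
  obtain ⟨c, hc_def⟩ : ∃ c : ℝ, c = η * (1 - L * η) := ⟨_, rfl⟩
  have hc : 0 < c := by rw [hc_def]; positivity
  obtain ⟨s2, hs2_def⟩ : ∃ s2 : ℝ, s2 = Real.sqrt (2 * μ) := ⟨_, rfl⟩
  have hs2 : 0 < s2 := hs2_def ▸ Real.sqrt_pos.mpr (by positivity)
  obtain ⟨K, hK_def⟩ : ∃ K : ℝ, K = 2 / ((1 - L * η) * s2) := ⟨_, rfl⟩
  have hK : 0 < K := by rw [hK_def]; positivity
  have hKcs : K * c * s2 = 2 * η := by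
    rw [hK_def, hc_def]
    field_simp
  obtain ⟨w, hw0, hwsucc⟩ :
      ∃ w : ℕ → E, w 0 = v ∧ ∀ k, w (k + 1) = w k + η • g (w k) :=
    ⟨fun k => (fun z => z + η • g z)^[k] v, rfl, fun k => Function.iterate_succ_apply' _ _ _⟩
  obtain ⟨Δ, hΔ_def⟩ : ∃ Δ : ℕ → ℝ, ∀ k, Δ k = f vs - f (w k) := ⟨_, fun _ => rfl⟩
  have hΔ0 : ∀ k, 0 ≤ Δ k := fun k => (hΔ_def k) ▸ sub_nonneg.mpr (hmax (w k))
  -- descent step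
  have hstep : ∀ k, f (w k) + c * ‖g (w k)‖ ^ 2 ≤ f (w (k + 1)) := by
    intro k
    have h := descent_aux f g L hL.le hg hLip (w k) (w k + η • g (w k))
    have hsimp : w k + η • g (w k) - w k = η • g (w k) := by abel
    rw [hsimp, real_inner_smul_right, real_inner_self_eq_norm_sq, norm_smul,
      Real.norm_eq_abs, abs_of_pos hη0, mul_pow] at h
    rw [hwsucc k]
    have hce : c * ‖g (w k)‖ ^ 2 = η * ‖g (w k)‖ ^ 2 - L * (η ^ 2 * ‖g (w k)‖ ^ 2) := by
      rw [hc_def]; ring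
    linarith
  have hΔstep : ∀ k, Δ (k + 1) ≤ Δ k - c * ‖g (w k)‖ ^ 2 := by
    intro k
    have := hstep k
    rw [hΔ_def k, hΔ_def (k + 1)]
    linarith
  -- PL bound : sqrt (Δ k) * s2 ≤ ‖g (w k)‖
  have hsqrtPL : ∀ k, Real.sqrt (Δ k) * s2 ≤ ‖g (w k)‖ := by
    intro k
    have h1 : μ * Δ k ≤ (1/2) * ‖g (w k)‖ ^ 2 := (hΔ_def k) ▸ hPL (w k)
    have h2 : Real.sqrt (Δ k) * s2 = Real.sqrt (2 * μ * Δ k) := by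
      rw [hs2_def, mul_comm, ← Real.sqrt_mul (by positivity), mul_comm (2*μ)]
    have h3 : 2 * μ * Δ k ≤ ‖g (w k)‖ ^ 2 := by nlinarith [h1]
    rw [h2]
    calc Real.sqrt (2 * μ * Δ k) ≤ Real.sqrt (‖g (w k)‖ ^ 2) := Real.sqrt_le_sqrt h3
      _ = ‖g (w k)‖ := Real.sqrt_sq (norm_nonneg _)
  -- key per-step length bound
  have hkey : ∀ k, η * ‖g (w k)‖ ≤ K * (Real.sqrt (Δ k) - Real.sqrt (Δ (k + 1))) := by
    intro k
    have hG0 : (0:ℝ) ≤ ‖g (w k)‖ := norm_nonneg _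
    have ha0 : 0 ≤ Δ k := hΔ0 k
    have hb0 : 0 ≤ Δ (k + 1) := hΔ0 (k + 1)
    have hba : Δ (k + 1) ≤ Δ k - c * ‖g (w k)‖ ^ 2 := hΔstep k
    obtain ⟨G, hG_def⟩ : ∃ G : ℝ, G = ‖g (w k)‖ := ⟨_, rfl⟩
    rw [← hG_def] at hG0 hba ⊢
    obtain ⟨sa, hsa_def⟩ : ∃ sa : ℝ, sa = Real.sqrt (Δ k) := ⟨_, rfl⟩
    obtain ⟨sb, hsb_def⟩ : ∃ sb : ℝ, sb = Real.sqrt (Δ (k + 1)) := ⟨_, rfl⟩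
    rw [← hsa_def, ← hsb_def]
    have hsa2 : sa ^ 2 = Δ k := hsa_def ▸ Real.sq_sqrt ha0
    have hsb2 : sb ^ 2 = Δ (k + 1) := hsb_def ▸ Real.sq_sqrt hb0
    have hsa0 : 0 ≤ sa := hsa_def ▸ Real.sqrt_nonneg _
    have hsb0 : 0 ≤ sb := hsb_def ▸ Real.sqrt_nonneg _
    have hsbsa : sb ≤ sa := by
      rw [hsa_def, hsb_def]
      exact Real.sqrt_le_sqrt (by nlinarith)
    have hsaG : sa * s2 ≤ G := by rw [hsa_def, hG_def]; exact hsqrtPL k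
    rcases eq_or_lt_of_le hG0 with hG | hG
    · have hGz : G = 0 := hG.symm
      have hsaz : sa = 0 := le_antisymm (by nlinarith) hsa0
      have hsbz : sb = 0 := le_antisymm (by nlinarith) hsb0
      rw [hGz, hsaz, hsbz]
      simp
    · have ha : 0 < Δ k := by
        by_contra h
        push_neg at h
        have haz : Δ k = 0 := le_antisymm h ha0
        nlinarith [hba, hb0, mul_pos hc (pow_pos hG 2), haz]
      have hsa : 0 < sa := by rw [hsa_def]; exact Real.sqrt_pos.mpr ha
      have h1 : c * G ^ 2 ≤ (sa - sb) * (sa + sb) := by nlinarith [hba, hsa2, hsb2]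
      have hsab : 0 ≤ sa - sb := by linarith
      have h2 : (sa - sb) * (sa + sb) ≤ (sa - sb) * (2 * sa) :=
        mul_le_mul_of_nonneg_left (by linarith : sa + sb ≤ 2 * sa) hsab
      have hA := mul_le_mul_of_nonneg_right (h1.trans h2) hs2.le
      have hB := mul_le_mul_of_nonneg_left hsaG
        (mul_nonneg hsab (by norm_num : (0:ℝ) ≤ 2))
      have h5 : c * G * s2 * G ≤ (sa - sb) * 2 * G := by nlinarith [hA, hB]
      have h6 : c * G * s2 ≤ (sa - sb) * 2 := le_of_mul_le_mul_right h5 hG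
      have h7 : K * (c * G * s2) ≤ K * ((sa - sb) * 2) :=
        mul_le_mul_of_nonneg_left h6 hK.le
      calc η * G = K * (c * G * s2) / 2 := by linear_combination (-G/2) * hKcs
        _ ≤ K * ((sa - sb) * 2) / 2 := by linarith
        _ = K * (sa - sb) := by ring
  -- telescoping
  have hstepnorm : ∀ n, ‖w (n+1) - w n‖ ≤ K * (Real.sqrt (Δ n) - Real.sqrt (Δ (n+1))) := by
    intro n
    rw [hwsucc n]
    have h : w n + η • g (w n) - w n = η • g (w n) := by abel
    rw [h, norm_smul, Real.norm_eq_abs, abs_of_pos hη0]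
    exact hkey n
  have hsum : ∀ m n, m ≤ n → ‖w n - w m‖ ≤ K * (Real.sqrt (Δ m) - Real.sqrt (Δ n)) := by
    intro m n hmn
    induction n, hmn using Nat.le_induction with
    | base => simp
    | succ n hmn ih =>
      calc ‖w (n+1) - w m‖ ≤ ‖w (n+1) - w n‖ + ‖w n - w m‖ :=
            norm_sub_le_norm_sub_add_norm_sub _ _ _
        _ ≤ K * (Real.sqrt (Δ n) - Real.sqrt (Δ (n+1)))
              + K * (Real.sqrt (Δ m) - Real.sqrt (Δ n)) := add_le_add (hstepnorm n) ih
        _ = K * (Real.sqrt (Δ m) - Real.sqrt (Δ (n+1))) := by ring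
  -- geometric decay
  obtain ⟨r, hr_def⟩ : ∃ r : ℝ, r = max (1 - 2*μ*c) 0 := ⟨_, rfl⟩
  have hr0 : 0 ≤ r := hr_def ▸ le_max_right _ _
  have hr1 : r < 1 := by
    rw [hr_def]
    apply max_lt _ one_pos
    nlinarith
  have hrate : ∀ k, Δ (k+1) ≤ r * Δ k := by
    intro k
    have h1 := hΔstep k
    have h2 : μ * Δ k ≤ (1/2) * ‖g (w k)‖ ^ 2 := (hΔ_def k) ▸ hPL (w k)
    have h3 : Δ k - c * ‖g (w k)‖ ^ 2 ≤ (1 - 2*μ*c) * Δ k := by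
      nlinarith [mul_le_mul_of_nonneg_left h2 hc.le]
    calc Δ (k+1) ≤ (1 - 2*μ*c) * Δ k := le_trans h1 h3
      _ ≤ r * Δ k := mul_le_mul_of_nonneg_right (hr_def ▸ le_max_left _ _) (hΔ0 k)
  have hgeo : ∀ n, Δ n ≤ r ^ n * Δ 0 := by
    intro n
    induction n with
    | zero => simp
    | succ n ih =>
      calc Δ (n+1) ≤ r * Δ n := hrate n
        _ ≤ r * (r ^ n * Δ 0) := mul_le_mul_of_nonneg_left ih hr0
        _ = r ^ (n+1) * Δ 0 := by ring
  have hsqrt_pow : ∀ n, Real.sqrt (r ^ n) = Real.sqrt r ^ n := by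
    intro n
    induction n with
    | zero => simp
    | succ n ih => rw [pow_succ, pow_succ, Real.sqrt_mul (pow_nonneg hr0 n), ih]
  have hsqrtgeo : ∀ n, Real.sqrt (Δ n) ≤ Real.sqrt (Δ 0) * Real.sqrt r ^ n := by
    intro n
    calc Real.sqrt (Δ n) ≤ Real.sqrt (r ^ n * Δ 0) := Real.sqrt_le_sqrt (hgeo n)
      _ = Real.sqrt r ^ n * Real.sqrt (Δ 0) := by
          rw [Real.sqrt_mul (pow_nonneg hr0 n), hsqrt_pow n]
      _ = Real.sqrt (Δ 0) * Real.sqrt r ^ n := by ring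
  -- Cauchy
  have hcauchy : CauchySeq w := by
    apply cauchySeq_of_le_geometric (Real.sqrt r) (K * Real.sqrt (Δ 0))
    · calc Real.sqrt r < Real.sqrt 1 := Real.sqrt_lt_sqrt hr0 hr1
        _ = 1 := Real.sqrt_one
    · intro n
      rw [dist_eq_norm, norm_sub_rev]
      calc ‖w (n+1) - w n‖ ≤ K * (Real.sqrt (Δ n) - Real.sqrt (Δ (n+1))) := hstepnorm n
        _ ≤ K * Real.sqrt (Δ n) := by
            nlinarith [Real.sqrt_nonneg (Δ (n+1)), hK.le]
        _ ≤ K * (Real.sqrt (Δ 0) * Real.sqrt r ^ n) :=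
            mul_le_mul_of_nonneg_left (hsqrtgeo n) hK.le
        _ = K * Real.sqrt (Δ 0) * Real.sqrt r ^ n := by ring
  obtain ⟨wl, hwl⟩ := cauchySeq_tendsto_of_complete hcauchy
  -- the limit is vs
  have hΔlim : Filter.Tendsto Δ Filter.atTop (nhds 0) := by
    apply squeeze_zero hΔ0 hgeo
    have := (tendsto_pow_atTop_nhds_zero_of_lt_one hr0 hr1).mul_const (Δ 0)
    simpa using this
  have hflim : Filter.Tendsto (fun n => f (w n)) Filter.atTop (nhds (f vs)) := by
    have hfun : (fun n => f (w n)) = fun n => f vs - Δ n := funext fun n => by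
      rw [hΔ_def n]; ring
    rw [hfun]
    simpa using tendsto_const_nhds.sub hΔlim
  have hfwl : Filter.Tendsto (fun n => f (w n)) Filter.atTop (nhds (f wl)) :=
    ((hg wl).continuousAt.tendsto).comp hwl
  have heq : f wl = f vs := tendsto_nhds_unique hfwl hflim
  have hwlvs : wl = vs := huniq wl (fun u => heq ▸ hmax u)
  -- conclude
  have hbound : ∀ n, ‖v - w n‖ ≤ K * Real.sqrt (Δ 0) := by
    intro n
    have h := hsum 0 n (Nat.zero_le n)
    rw [hw0] at h
    rw [norm_sub_rev]
    calc ‖w n - v‖ ≤ K * (Real.sqrt (Δ 0) - Real.sqrt (Δ n)) := h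
      _ ≤ K * Real.sqrt (Δ 0) := by nlinarith [Real.sqrt_nonneg (Δ n), hK.le]
  have htend : Filter.Tendsto (fun n => ‖v - w n‖) Filter.atTop (nhds ‖v - wl‖) :=
    (Filter.Tendsto.const_sub v hwl).norm
  have hfinal : ‖v - wl‖ ≤ K * Real.sqrt (Δ 0) :=
    le_of_tendsto htend (Filter.Eventually.of_forall hbound)
  rw [hwlvs] at hfinal
  have hΔ0v : Δ 0 = f vs - f v := by rw [hΔ_def 0, hw0]
  rw [hΔ0v] at hfinal
  rw [hK_def, hs2_def] at hfinal
  exact hfinal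

lemma pl_dist (f : E → ℝ) (g : E → E) (L μ : ℝ) (hL : 0 < L) (hμ : 0 < μ)
    (hg : ∀ v, HasGradientAt f (g v) v)
    (hLip : ∀ u v, ‖g u - g v‖ ≤ L * ‖u - v‖)
    (vs : E) (hmax : ∀ w, f w ≤ f vs)
    (huniq : ∀ v, (∀ w, f w ≤ f v) → v = vs)
    (hPL : ∀ v, μ * (f vs - f v) ≤ (1/2) * ‖g v‖ ^ 2)
    (v : E) :
    ‖v - vs‖ ≤ Real.sqrt (2 * (f vs - f v) / μ) := by
  have hΔ0 : 0 ≤ f vs - f v := sub_nonneg.mpr (hmax v)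
  obtain ⟨D, hD_def⟩ : ∃ D : ℝ, D = Real.sqrt (f vs - f v) := ⟨_, rfl⟩
  have hD0 : 0 ≤ D := hD_def ▸ Real.sqrt_nonneg _
  have hs2 : 0 < Real.sqrt (2 * μ) := Real.sqrt_pos.mpr (by positivity)
  have hcont : ContinuousAt (fun η : ℝ => (2 / ((1 - L * η) * Real.sqrt (2 * μ))) * D) 0 := by
    apply ContinuousAt.mul _ continuousAt_const
    apply ContinuousAt.div continuousAt_const
    · exact ((continuous_const.sub (continuous_const.mul continuous_id)).mul
        continuous_const).continuousAt
    · simp only [mul_zero, sub_zero, one_mul]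
      exact ne_of_gt hs2
  have hF : Filter.Tendsto (fun η : ℝ => (2 / ((1 - L * η) * Real.sqrt (2 * μ))) * D)
      (nhdsWithin 0 (Set.Ioi 0)) (nhds ((2 / ((1 - L * 0) * Real.sqrt (2 * μ))) * D)) :=
    (hcont.tendsto).mono_left nhdsWithin_le_nhds
  have hev : ∀ᶠ η in nhdsWithin (0:ℝ) (Set.Ioi 0),
      ‖v - vs‖ ≤ (2 / ((1 - L * η) * Real.sqrt (2 * μ))) * D := by
    filter_upwards [Ioo_mem_nhdsGT_of_mem
      (show (0:ℝ) ∈ Set.Ico 0 (1/L) from ⟨le_refl 0, by positivity⟩)] with η hη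
    have hη1 : L * η < 1 := by
      have := (lt_div_iff₀ hL).mp hη.2
      linarith
    rw [hD_def]
    exact pl_dist_le f g L μ hL hμ hg hLip vs hmax huniq hPL η hη.1 hη1 v
  have hlim : ‖v - vs‖ ≤ (2 / ((1 - L * 0) * Real.sqrt (2 * μ))) * D :=
    ge_of_tendsto hF hev
  simp only [mul_zero, sub_zero, one_mul] at hlim
  have h2μ : Real.sqrt (2 * μ) ^ 2 = 2 * μ := Real.sq_sqrt (by positivity)
  have hD2 : D ^ 2 = f vs - f v := hD_def ▸ Real.sq_sqrt hΔ0
  have key : (2 / Real.sqrt (2 * μ) * D) ^ 2 = 2 * (f vs - f v) / μ := by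
    rw [mul_pow, div_pow, h2μ, hD2]
    field_simp
  calc ‖v - vs‖ ≤ 2 / Real.sqrt (2 * μ) * D := hlim
    _ = Real.sqrt ((2 / Real.sqrt (2 * μ) * D) ^ 2) :=
        (Real.sqrt_sq (by positivity)).symm
    _ = Real.sqrt (2 * (f vs - f v) / μ) := by rw [key]

lemma hasGradientAt_sub' {f₁ f₂ : E → ℝ} {g₁ g₂ : E} {x : E}
    (h₁ : HasGradientAt f₁ g₁ x) (h₂ : HasGradientAt f₂ g₂ x) :
    HasGradientAt (fun v => f₁ v - f₂ v) (g₁ - g₂) x := by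
  rw [hasGradientAt_iff_hasFDerivAt, map_sub]
  exact h₁.hasFDerivAt.sub h₂.hasFDerivAt

lemma quad_grad (γ : ℝ) (hγ : γ ≠ 0) (x v : E) :
    HasGradientAt (fun v' : E => ‖v' - x‖ ^ 2 / (2 * γ)) (γ⁻¹ • (v - x)) v := by
  have h1 : HasFDerivAt (fun v' : E => v' - x) (ContinuousLinearMap.id ℝ E) v := by
    simpa using (hasFDerivAt_id v).sub_const x
  have h2 := (h1.inner ℝ h1).const_mul ((2 * γ)⁻¹)
  have hfun : (fun v' : E => (2 * γ)⁻¹ * (inner ℝ (v' - x) (v' - x) : ℝ))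
      = fun v' : E => ‖v' - x‖ ^ 2 / (2 * γ) := by
    funext v'
    rw [real_inner_self_eq_norm_sq, inv_mul_eq_div]
  rw [hfun] at h2
  rw [hasGradientAt_iff_hasFDerivAt]
  convert h2 using 1
  · rfl
  ext h
  simp only [ContinuousLinearMap.coe_smul', Pi.smul_apply, toDual_apply_apply,
    ContinuousLinearMap.coe_comp', Function.comp_apply, ContinuousLinearMap.prod_apply,
    ContinuousLinearMap.coe_id', id, fderivInnerCLM_apply, smul_eq_mul,
    real_inner_smul_right, real_inner_comm]
  field_simp
  ring

lemma grad_zero_of_isMax {f : E → ℝ} {g x} (h : HasGradientAt f g x)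
    (hm : ∀ w, f w ≤ f x) : g = 0 := by
  have hmax : IsLocalMax f x := Filter.Eventually.of_forall hm
  have := hmax.hasFDerivAt_eq_zero h.hasFDerivAt
  have h0 : toDual ℝ E g = toDual ℝ E 0 := by rw [this, map_zero]
  exact (toDual ℝ E).injective h0

lemma snd_le_sqrt_sq_add_sq (a b : ℝ) (hb : 0 ≤ b) : b ≤ Real.sqrt (a ^ 2 + b ^ 2) := by
  calc b = Real.sqrt (b ^ 2) := (Real.sqrt_sq hb).symm
    _ ≤ Real.sqrt (a ^ 2 + b ^ 2) := Real.sqrt_le_sqrt (by nlinarith [sq_nonneg a])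

end

open MeasureTheory

noncomputable section

/-- Under the μ-PL-in-T assumption, `θ ↦ T*(θ)` is κ-Lipschitz from
`ℝ^p` to `L²(P)` with `κ = l/μ` and `l = l₀ + 1/γ`. -/
theorem vstar_kappa_lipschitz_in_theta
    {d p : ℕ} (P : Measure (EuclideanSpace ℝ (Fin d))) [IsProbabilityMeasure P]
    (hP2 : Integrable (fun x => ‖x‖ ^ 2) P)
    (ℓ : EuclideanSpace ℝ (Fin p) → EuclideanSpace ℝ (Fin d) → ℝ)
    (gθ : EuclideanSpace ℝ (Fin p) → EuclideanSpace ℝ (Fin d) → EuclideanSpace ℝ (Fin p))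
    (gv : EuclideanSpace ℝ (Fin p) → EuclideanSpace ℝ (Fin d) → EuclideanSpace ℝ (Fin d))
    (l₀ γ μ : ℝ) (hl₀ : 0 ≤ l₀) (hγ : 0 < γ) (hμ : 0 < μ)
    (hgθ : ∀ θ v, HasGradientAt (fun θ' => ℓ θ' v) (gθ θ v) θ)
    (hgv : ∀ θ v, HasGradientAt (fun v' => ℓ θ v') (gv θ v) v)
    (hsmooth : ∀ θ v θ' v',
      Real.sqrt (‖gθ θ' v' - gθ θ v‖ ^ 2 + ‖gv θ' v' - gv θ v‖ ^ 2)
        ≤ l₀ * Real.sqrt (‖θ' - θ‖ ^ 2 + ‖v' - v‖ ^ 2))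
    (vstar : EuclideanSpace ℝ (Fin p) → EuclideanSpace ℝ (Fin d) → EuclideanSpace ℝ (Fin d))
    (hmax : ∀ θ, ∀ᵐ x ∂P, ∀ v,
      ℓ θ v - ‖v - x‖ ^ 2 / (2 * γ) ≤ ℓ θ (vstar θ x) - ‖vstar θ x - x‖ ^ 2 / (2 * γ))
    (huniq : ∀ θ, ∀ᵐ x ∂P, ∀ v,
      (∀ w, ℓ θ w - ‖w - x‖ ^ 2 / (2 * γ) ≤ ℓ θ v - ‖v - x‖ ^ 2 / (2 * γ)) → v = vstar θ x)
    (hPL : ∀ θ, ∀ᵐ x ∂P, ∀ v,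
      μ * ((ℓ θ (vstar θ x) - ‖vstar θ x - x‖ ^ 2 / (2 * γ)) - (ℓ θ v - ‖v - x‖ ^ 2 / (2 * γ)))
        ≤ (1 / 2) * ‖gv θ v - γ⁻¹ • (v - x)‖ ^ 2)
    (hvstar : ∀ θ, MemLp (vstar θ) 2 P) :
    ∀ θ θ' : EuclideanSpace ℝ (Fin p),
      Real.sqrt (∫ x, ‖vstar θ' x - vstar θ x‖ ^ 2 ∂P)
        ≤ ((l₀ + γ⁻¹) / μ) * ‖θ' - θ‖ := by
  intro θ θ'
  have hγ' : γ ≠ 0 := ne_of_gt hγ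
  have hL : (0:ℝ) < l₀ + γ⁻¹ := by positivity
  -- pointwise a.e. bound
  have hae : ∀ᵐ x ∂P, ‖vstar θ' x - vstar θ x‖ ≤ (l₀ / μ) * ‖θ' - θ‖ := by
    filter_upwards [hmax θ, hmax θ', huniq θ', hPL θ'] with x hmaxθ hmaxθ' huniqθ' hPLθ'
    -- the objective for θ' and its gradient
    have hg' : ∀ v, HasGradientAt (fun v' => ℓ θ' v' - ‖v' - x‖ ^ 2 / (2 * γ))
        (gv θ' v - γ⁻¹ • (v - x)) v :=
      fun v => hasGradientAt_sub' (hgv θ' v) (quad_grad γ hγ' x v)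
    -- Lipschitz bound for the gradient
    have hLip : ∀ u w, ‖(gv θ' u - γ⁻¹ • (u - x)) - (gv θ' w - γ⁻¹ • (w - x))‖
        ≤ (l₀ + γ⁻¹) * ‖u - w‖ := by
      intro u w
      have h1 : ‖gv θ' u - gv θ' w‖ ≤ l₀ * ‖u - w‖ := by
        have h := hsmooth θ' w θ' u
        have hr : Real.sqrt (‖θ' - θ'‖ ^ 2 + ‖u - w‖ ^ 2) = ‖u - w‖ := by
          rw [sub_self, norm_zero]
          simpa using Real.sqrt_sq (norm_nonneg (u - w))
        rw [hr] at h
        exact le_trans (snd_le_sqrt_sq_add_sq _ _ (norm_nonneg _)) h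
      have h2 : (gv θ' u - γ⁻¹ • (u - x)) - (gv θ' w - γ⁻¹ • (w - x))
          = (gv θ' u - gv θ' w) - γ⁻¹ • (u - w) := by
        rw [smul_sub, smul_sub, smul_sub]
        abel
      rw [h2]
      calc ‖(gv θ' u - gv θ' w) - γ⁻¹ • (u - w)‖
          ≤ ‖gv θ' u - gv θ' w‖ + ‖γ⁻¹ • (u - w)‖ := norm_sub_le _ _
        _ ≤ l₀ * ‖u - w‖ + γ⁻¹ * ‖u - w‖ := by
            rw [norm_smul, Real.norm_eq_abs, abs_of_pos (by positivity : (0:ℝ) < γ⁻¹)]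
            exact add_le_add h1 (le_refl _)
        _ = (l₀ + γ⁻¹) * ‖u - w‖ := by ring
    -- distance bound from the PL lemma
    have hdist := pl_dist (fun v' => ℓ θ' v' - ‖v' - x‖ ^ 2 / (2 * γ))
      (fun v => gv θ' v - γ⁻¹ • (v - x)) (l₀ + γ⁻¹) μ hL hμ hg' hLip
      (vstar θ' x) hmaxθ' huniqθ' hPLθ' (vstar θ x)
    -- gradient of the θ-objective vanishes at vstar θ x
    have hzero : gv θ (vstar θ x) - γ⁻¹ • (vstar θ x - x) = 0 :=
      grad_zero_of_isMax (hasGradientAt_sub' (hgv θ (vstar θ x)) (quad_grad γ hγ' x _)) hmaxθ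
    have hγveq : gv θ (vstar θ x) = γ⁻¹ • (vstar θ x - x) := sub_eq_zero.mp hzero
    -- bound on the gradient of the θ'-objective at vstar θ x
    have hgbound : ‖gv θ' (vstar θ x) - γ⁻¹ • (vstar θ x - x)‖ ≤ l₀ * ‖θ' - θ‖ := by
      rw [← hγveq]
      have h := hsmooth θ (vstar θ x) θ' (vstar θ x)
      have hr : Real.sqrt (‖θ' - θ‖ ^ 2 + ‖vstar θ x - vstar θ x‖ ^ 2) = ‖θ' - θ‖ := by
        rw [sub_self, norm_zero]
        simpa using Real.sqrt_sq (norm_nonneg (θ' - θ))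
      rw [hr] at h
      exact le_trans (snd_le_sqrt_sq_add_sq _ _ (norm_nonneg _)) h
    -- bound the function gap
    have hgap : μ * ((ℓ θ' (vstar θ' x) - ‖vstar θ' x - x‖ ^ 2 / (2 * γ))
        - (ℓ θ' (vstar θ x) - ‖vstar θ x - x‖ ^ 2 / (2 * γ)))
        ≤ (1/2) * (l₀ * ‖θ' - θ‖) ^ 2 := by
      refine le_trans (hPLθ' (vstar θ x)) ?_
      have := hgbound
      nlinarith [norm_nonneg (gv θ' (vstar θ x) - γ⁻¹ • (vstar θ x - x))]
    -- combine
    rw [norm_sub_rev]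
    refine le_trans hdist ?_
    have hΔ0 : 0 ≤ (ℓ θ' (vstar θ' x) - ‖vstar θ' x - x‖ ^ 2 / (2 * γ))
        - (ℓ θ' (vstar θ x) - ‖vstar θ x - x‖ ^ 2 / (2 * γ)) := sub_nonneg.mpr (hmaxθ' _)
    have hfrac : 2 * ((ℓ θ' (vstar θ' x) - ‖vstar θ' x - x‖ ^ 2 / (2 * γ))
        - (ℓ θ' (vstar θ x) - ‖vstar θ x - x‖ ^ 2 / (2 * γ))) / μ
        ≤ (l₀ * ‖θ' - θ‖ / μ) ^ 2 := by
      rw [div_pow, div_le_div_iff₀ hμ (by positivity : (0:ℝ) < μ ^ 2)]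
      nlinarith [mul_le_mul_of_nonneg_left hgap hμ.le]
    calc Real.sqrt (2 * ((ℓ θ' (vstar θ' x) - ‖vstar θ' x - x‖ ^ 2 / (2 * γ))
          - (ℓ θ' (vstar θ x) - ‖vstar θ x - x‖ ^ 2 / (2 * γ))) / μ)
        ≤ Real.sqrt ((l₀ * ‖θ' - θ‖ / μ) ^ 2) := Real.sqrt_le_sqrt hfrac
      _ = l₀ * ‖θ' - θ‖ / μ := Real.sqrt_sq (by positivity)
      _ = (l₀ / μ) * ‖θ' - θ‖ := by ring
  -- integrate the pointwise bound
  have hC0 : 0 ≤ (l₀ / μ) * ‖θ' - θ‖ := by positivity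
  have hae2 : ∀ᵐ x ∂P, ‖vstar θ' x - vstar θ x‖ ^ 2 ≤ ((l₀ / μ) * ‖θ' - θ‖) ^ 2 :=
    hae.mono fun x hx => by nlinarith [norm_nonneg (vstar θ' x - vstar θ x)]
  have hint : ∫ x, ‖vstar θ' x - vstar θ x‖ ^ 2 ∂P ≤ ((l₀ / μ) * ‖θ' - θ‖) ^ 2 := by
    by_cases hI : Integrable (fun x => ‖vstar θ' x - vstar θ x‖ ^ 2) P
    · calc ∫ x, ‖vstar θ' x - vstar θ x‖ ^ 2 ∂P
          ≤ ∫ _, ((l₀ / μ) * ‖θ' - θ‖) ^ 2 ∂P := integral_mono_ae hI (integrable_const _) hae2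
        _ = ((l₀ / μ) * ‖θ' - θ‖) ^ 2 := by simp
    · rw [integral_undef hI]
      positivity
  calc Real.sqrt (∫ x, ‖vstar θ' x - vstar θ x‖ ^ 2 ∂P)
      ≤ Real.sqrt (((l₀ / μ) * ‖θ' - θ‖) ^ 2) := Real.sqrt_le_sqrt hint
    _ = (l₀ / μ) * ‖θ' - θ‖ := Real.sqrt_sq hC0
    _ ≤ ((l₀ + γ⁻¹) / μ) * ‖θ' - θ‖ := by
        have h : l₀ / μ ≤ (l₀ + γ⁻¹) / μ :=
          (div_le_div_iff_of_pos_right hμ).mpr (by linarith [inv_pos.mpr hγ])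
        exact mul_le_mul_of_nonneg_right h (norm_nonneg _)
end
end
end

section
/- Under the μ-PL-in-T assumption, for every θ ∈ ℝ^p and T ∈ L²(P), ‖∂_θL(θ,T) − ∂φ(θ)‖ ≤ κ ‖∂_TL(θ,T)‖_{L²(P)}, where κ = l/μ and ∂φ(θ) = ∂_θL(θ,T*(θ)). -/
open MeasureTheory InnerProductSpace Filter Topology ProbabilityTheory

noncomputable section

variable {E : Type*} [NormedAddCommGroup E] [InnerProductSpace ℝ E] [CompleteSpace E]

lemma my_hasGradientAt_norm_sq (x v : E) :
    HasGradientAt (fun v' => ‖v' - x‖ ^ 2) ((2:ℝ) • (v - x)) v := by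
  rw [hasGradientAt_iff_isLittleO]
  have key : ∀ v' : E,
      ‖v' - x‖ ^ 2 - ‖v - x‖ ^ 2 - inner ℝ ((2:ℝ) • (v - x)) (v' - v) = ‖v' - v‖ ^ 2 := by
    intro v'
    have h : v' - x = (v - x) + (v' - v) := by abel
    rw [h, norm_add_sq_real, real_inner_smul_left]
    ring
  simp only [key]
  have htend : Filter.Tendsto (fun v' : E => ‖v' - v‖) (nhds v) (nhds 0) := by
    have : Filter.Tendsto (fun v' : E => v' - v) (nhds v) (nhds (v - v)) :=
      (continuous_id.sub continuous_const).tendsto v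
    simpa using this.norm
  refine Asymptotics.isLittleO_iff.mpr fun c hc => ?_
  filter_upwards [htend.eventually_lt_const hc] with z hz
  have h0 : (0:ℝ) ≤ ‖z - v‖ := norm_nonneg _
  rw [Real.norm_of_nonneg (by positivity)]
  nlinarith

lemma my_hasGradientAt_comb {F : E → ℝ} {a : E} (x v : E) {γ : ℝ} (hγ : 0 < γ)
    (hF : HasGradientAt F a v) :
    HasGradientAt (fun v' => F v' - ‖v' - x‖ ^ 2 / (2 * γ)) (a - γ⁻¹ • (v - x)) v := by
  have h2 := my_hasGradientAt_norm_sq x v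
  rw [hasGradientAt_iff_hasFDerivAt] at h2 hF ⊢
  have H := hF.sub (h2.const_mul ((2*γ)⁻¹))
  have hfun : (fun v' => F v' - ‖v' - x‖ ^ 2 / (2 * γ))
      = fun v' => F v' - (2*γ)⁻¹ * ‖v' - x‖ ^ 2 := by
    funext v'; ring
  have heq : (toDual ℝ E) (a - γ⁻¹ • (v - x))
      = (toDual ℝ E) a - (2*γ)⁻¹ • (toDual ℝ E) ((2:ℝ) • (v - x)) := by
    ext w
    simp only [ContinuousLinearMap.sub_apply, ContinuousLinearMap.smul_apply, toDual_apply_apply,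
      inner_sub_left, real_inner_smul_left, smul_eq_mul]
    have hγ' : γ ≠ 0 := ne_of_gt hγ
    field_simp
  rw [hfun, heq]
  exact H

lemma my_taylor_bound {f : E → ℝ} {g : E → E} {L : ℝ} (hL : 0 ≤ L)
    (hg : ∀ z, HasGradientAt f (g z) z)
    (hLip : ∀ z w, ‖g z - g w‖ ≤ L * ‖z - w‖) (u w : E) :
    |f u - f w - inner ℝ (g w) (u - w)| ≤ L * ‖u - w‖ * ‖u - w‖ := by
  have hbound : ∀ z ∈ Metric.closedBall w ‖u - w‖,
      ‖(toDual ℝ E) (g z) - (toDual ℝ E) (g w)‖ ≤ L * ‖u - w‖ := by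
    intro z hz
    rw [← map_sub, LinearIsometryEquiv.norm_map]
    refine (hLip z w).trans (mul_le_mul_of_nonneg_left ?_ hL)
    have := Metric.mem_closedBall.mp hz
    rwa [dist_eq_norm] at this
  have hmem : u ∈ Metric.closedBall w ‖u - w‖ :=
    Metric.mem_closedBall.mpr (le_of_eq (dist_eq_norm u w))
  have H := (convex_closedBall w ‖u - w‖).norm_image_sub_le_of_norm_hasFDerivWithin_le'
    (f := f) (f' := fun z => (toDual ℝ E) (g z)) (φ := (toDual ℝ E) (g w)) (C := L * ‖u - w‖)
    (fun z _ => (hasGradientAt_iff_hasFDerivAt.mp (hg z)).hasFDerivWithinAt)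
    hbound (Metric.mem_closedBall_self (norm_nonneg _)) hmem
  rw [toDual_apply_apply] at H
  rw [← Real.norm_eq_abs]
  calc ‖f u - f w - inner ℝ (g w) (u - w)‖ ≤ (L * ‖u - w‖) * ‖u - w‖ := H
  _ = L * ‖u - w‖ * ‖u - w‖ := by ring

lemma key_EB {f : E → ℝ} {g : E → E} {L μ η : ℝ} (hL : 0 < L) (hμ : 0 < μ)
    (hη : 0 < η) (hηL : η ≤ 1/(2*L)) (hημ : η ≤ 1/(2*μ))
    (hg : ∀ z, HasGradientAt f (g z) z)
    (hLip : ∀ z w, ‖g z - g w‖ ≤ L * ‖z - w‖)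
    {vs : E} (hmx : ∀ w, f w ≤ f vs)
    (huq : ∀ z, (∀ w, f w ≤ f z) → z = vs)
    (hPL : ∀ z, μ * (f vs - f z) ≤ (1/2) * ‖g z‖^2)
    (v : E) :
    μ * (1 - L*η) * ‖v - vs‖ ≤ ‖g v‖ := by
  have h2Lη : η * (2*L) ≤ 1 := (le_div_iff₀ (by positivity : (0:ℝ) < 2*L)).mp hηL
  have h2μη : η * (2*μ) ≤ 1 := (le_div_iff₀ (by positivity : (0:ℝ) < 2*μ)).mp hημ
  set q : ℝ := 1 - L * η with hqdef
  have hq0 : 0 < q := by simp only [hqdef]; nlinarith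
  have hq1 : q ≤ 1 := by simp only [hqdef]; nlinarith
  set sμ : ℝ := Real.sqrt (2*μ) with hsμdef
  have hsμ0 : 0 < sμ := Real.sqrt_pos.mpr (by linarith)
  have hsμsq : sμ^2 = 2*μ := Real.sq_sqrt (by linarith)
  set c : ℝ := 2 / (q * sμ) with hcdef
  have hc0 : 0 < c := by positivity
  -- descent step
  have descent : ∀ z : E, f z + η * q * ‖g z‖^2 ≤ f (z + η • g z) := by
    intro z
    have H := my_taylor_bound hL.le hg hLip (z + η • g z) z
    have h1 : (z + η • g z) - z = η • g z := by abel
    have h2 : (inner ℝ (g z) (η • g z) : ℝ) = η * ‖g z‖^2 := by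
      rw [real_inner_smul_right, real_inner_self_eq_norm_sq]
    have h3 : ‖η • g z‖ = η * ‖g z‖ := by
      rw [norm_smul, Real.norm_of_nonneg hη.le]
    rw [h1, h2, h3] at H
    have H1 := (abs_le.mp H).1
    simp only [hqdef]
    nlinarith [sq_nonneg ‖g z‖]
  set step : E → E := fun z => z + η • g z with hstepdef
  set u : ℕ → E := fun k => step^[k] v with hudef
  have hu0 : u 0 = v := rfl
  have husucc : ∀ k, u (k+1) = u k + η • g (u k) := by
    intro k
    simp only [hudef, Function.iterate_succ_apply', hstepdef]
  clear_value u
  clear hudef hstepdef step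
  set δ : ℕ → ℝ := fun k => f vs - f (u k) with hδdef
  have hδ0 : ∀ k, 0 ≤ δ k := fun k => sub_nonneg.mpr (hmx _)
  set s : ℕ → ℝ := fun k => Real.sqrt (δ k) with hsdef
  have hs0 : ∀ k, 0 ≤ s k := fun k => Real.sqrt_nonneg _
  have hssq : ∀ k, (s k)^2 = δ k := fun k => Real.sq_sqrt (hδ0 k)
  have hstepineq : ∀ k, δ (k+1) ≤ δ k - η * q * ‖g (u k)‖^2 := by
    intro k
    have := descent (u k)
    rw [← husucc k] at this
    simp only [hδdef]
    linarith
  have hPLk : ∀ k, 2 * μ * δ k ≤ ‖g (u k)‖^2 := by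
    intro k
    have := hPL (u k)
    simp only [hδdef]
    linarith
  have hglb : ∀ k, sμ * s k ≤ ‖g (u k)‖ := by
    intro k
    have h1 : sμ * s k = Real.sqrt (2 * μ * δ k) := by
      rw [hsdef, hsμdef, ← Real.sqrt_mul (by linarith)]
    rw [h1]
    calc Real.sqrt (2*μ*δ k) ≤ Real.sqrt (‖g (u k)‖^2) := Real.sqrt_le_sqrt (hPLk k)
    _ = ‖g (u k)‖ := Real.sqrt_sq (norm_nonneg _)
  have hδmono : ∀ k, δ (k+1) ≤ δ k := by
    intro k
    have := hstepineq k
    nlinarith [sq_nonneg ‖g (u k)‖, mul_pos hη hq0]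
  have hsmono : ∀ k, s (k+1) ≤ s k := fun k => Real.sqrt_le_sqrt (hδmono k)
  have hdist : ∀ k, η * ‖g (u k)‖ ≤ c * (s k - s (k+1)) := by
    intro k
    rcases eq_or_lt_of_le (hδ0 k) with h0 | hpos
    · have h1 := hstepineq k
      have h2 := hδ0 (k+1)
      have h3 : η * q * ‖g (u k)‖^2 ≤ 0 := by rw [← h0] at h1; linarith
      have h4 : ‖g (u k)‖^2 = 0 := le_antisymm (by nlinarith [mul_pos hη hq0]) (sq_nonneg _)
      have hgnorm : ‖g (u k)‖ = 0 := by
        have := (pow_eq_zero_iff (two_ne_zero)).mp h4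
        exact this
      have hgz : g (u k) = 0 := norm_eq_zero.mp hgnorm
      have hueq : u (k+1) = u k := by rw [husucc k, hgz, smul_zero, add_zero]
      have hseq : s (k+1) = s k := by simp only [hsdef, hδdef, hueq]
      rw [hgnorm, hseq]
      simp
    · have hsk : 0 < s k := Real.sqrt_pos.mpr hpos
      have e1 : (s k - s (k+1)) * (s k + s (k+1)) = δ k - δ (k+1) := by
        have := hssq k; have := hssq (k+1); nlinarith
      have hmul : (η * q * ‖g (u k)‖) * (sμ * s k) ≤ (η * q * ‖g (u k)‖) * ‖g (u k)‖ :=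
        mul_le_mul_of_nonneg_left (hglb k)
          (mul_nonneg (mul_nonneg hη.le hq0.le) (norm_nonneg (g (u k))))
      have hD : (s k - s (k+1)) * (s k + s (k+1)) ≤ 2 * (s k - s (k+1)) * s k := by
        nlinarith [sq_nonneg (s k - s (k+1))]
      have key2 : (η * q * sμ * ‖g (u k)‖) * s k ≤ (2 * (s k - s (k+1))) * s k := by
        calc (η * q * sμ * ‖g (u k)‖) * s k = (η * q * ‖g (u k)‖) * (sμ * s k) := by ring
        _ ≤ (η * q * ‖g (u k)‖) * ‖g (u k)‖ := hmul
        _ = η * q * ‖g (u k)‖ ^ 2 := by ring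
        _ ≤ δ k - δ (k+1) := by linarith [hstepineq k]
        _ = (s k - s (k+1)) * (s k + s (k+1)) := e1.symm
        _ ≤ 2 * (s k - s (k+1)) * s k := hD
        _ = (2 * (s k - s (k+1))) * s k := by ring
      have key3 : η * q * sμ * ‖g (u k)‖ ≤ 2 * (s k - s (k+1)) :=
        le_of_mul_le_mul_right key2 hsk
      rw [hcdef, div_mul_eq_mul_div, le_div_iff₀ (by positivity)]
      calc η * ‖g (u k)‖ * (q * sμ) = η * q * sμ * ‖g (u k)‖ := by ring
      _ ≤ 2 * (s k - s (k+1)) := key3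
  set r : ℝ := 1 - 2*μ*η*q with hrdef
  have hr0 : 0 ≤ r := by
    simp only [hrdef]
    nlinarith [mul_le_mul_of_nonneg_left hq1 (by positivity : (0:ℝ) ≤ 2*μ*η)]
  have hr1 : r < 1 := by
    simp only [hrdef]
    nlinarith [mul_pos (mul_pos (mul_pos two_pos hμ) hη) hq0]
  have hdecay : ∀ k, δ (k+1) ≤ r * δ k := by
    intro k
    have h1 := hstepineq k
    have h2 := mul_le_mul_of_nonneg_left (hPLk k) (mul_nonneg hη.le hq0.le)
    simp only [hrdef]
    linarith
  set ρ : ℝ := Real.sqrt r with hρdef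
  have hρ0 : 0 ≤ ρ := Real.sqrt_nonneg _
  have hρ1 : ρ < 1 := by
    rw [hρdef, Real.sqrt_lt' one_pos, one_pow]
    exact hr1
  have hsle : ∀ k, s k ≤ s 0 * ρ^k := by
    intro k
    induction k with
    | zero => simp
    | succ n ih =>
      calc s (n+1) = Real.sqrt (δ (n+1)) := rfl
      _ ≤ Real.sqrt (r * δ n) := Real.sqrt_le_sqrt (hdecay n)
      _ = ρ * s n := by rw [hρdef, hsdef, Real.sqrt_mul hr0]
      _ ≤ ρ * (s 0 * ρ^n) := mul_le_mul_of_nonneg_left ih hρ0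
      _ = s 0 * ρ^(n+1) := by ring
  have hcauchy : CauchySeq u := by
    apply cauchySeq_of_le_geometric ρ (c * s 0) hρ1
    intro n
    rw [dist_eq_norm, norm_sub_rev]
    have h1 : u (n+1) - u n = η • g (u n) := by rw [husucc]; abel
    rw [h1, norm_smul, Real.norm_of_nonneg hη.le]
    calc η * ‖g (u n)‖ ≤ c * (s n - s (n+1)) := hdist n
    _ ≤ c * s n := mul_le_mul_of_nonneg_left (by linarith [hs0 (n+1)]) hc0.le
    _ ≤ c * (s 0 * ρ^n) := mul_le_mul_of_nonneg_left (hsle n) hc0.le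
    _ = c * s 0 * ρ^n := by ring
  obtain ⟨w, hw⟩ := cauchySeq_tendsto_of_complete hcauchy
  have hδle : ∀ k, δ k ≤ δ 0 * r ^ k := by
    intro k
    induction k with
    | zero => simp
    | succ n ih =>
      calc δ (n+1) ≤ r * δ n := hdecay n
      _ ≤ r * (δ 0 * r ^ n) := mul_le_mul_of_nonneg_left ih hr0
      _ = δ 0 * r ^ (n+1) := by ring
  have hδtend : Tendsto δ atTop (𝓝 0) := by
    refine squeeze_zero hδ0 hδle ?_
    have := (tendsto_pow_atTop_nhds_zero_of_lt_one hr0 hr1).const_mul (δ 0)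
    simpa using this
  have hfu : Tendsto (fun k => f (u k)) atTop (𝓝 (f w)) :=
    ((hg w).continuousAt.tendsto).comp hw
  have hfu' : Tendsto (fun k => f (u k)) atTop (𝓝 (f vs)) := by
    have h1 : Tendsto (fun k => f vs - δ k) atTop (𝓝 (f vs - 0)) :=
      tendsto_const_nhds.sub hδtend
    have h2 : (fun k => f vs - δ k) = fun k => f (u k) := by
      funext k
      simp only [hδdef]
      ring
    rw [h2] at h1
    simpa using h1
  have hfw : f w = f vs := tendsto_nhds_unique hfu hfu'
  have hwvs : w = vs := huq w (fun z => (hmx z).trans (le_of_eq hfw.symm))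
  have hK : ∀ K, ‖u K - v‖ ≤ c * (s 0 - s K) := by
    intro K
    induction K with
    | zero => simp [hu0]
    | succ n ih =>
      have h1 : ‖u (n+1) - v‖ ≤ ‖u (n+1) - u n‖ + ‖u n - v‖ :=
        norm_sub_le_norm_sub_add_norm_sub _ _ _
      have h2 : u (n+1) - u n = η • g (u n) := by rw [husucc n]; abel
      have h3 : ‖u (n+1) - u n‖ ≤ c * (s n - s (n+1)) := by
        rw [h2, norm_smul, Real.norm_of_nonneg hη.le]
        exact hdist n
      calc ‖u (n+1) - v‖ ≤ c * (s n - s (n+1)) + c * (s 0 - s n) := by linarith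
      _ = c * (s 0 - s (n+1)) := by ring
  have hlim : ‖w - v‖ ≤ c * s 0 := by
    refine le_of_tendsto ((hw.sub tendsto_const_nhds).norm) ?_
    filter_upwards with K
    calc ‖u K - v‖ ≤ c * (s 0 - s K) := hK K
    _ ≤ c * s 0 := mul_le_mul_of_nonneg_left (by linarith [hs0 K]) hc0.le
  have hs0le : sμ * s 0 ≤ ‖g v‖ := by
    have := hglb 0
    rwa [hu0] at this
  have hcval : μ * q * c = sμ := by
    have hne : q * sμ ≠ 0 := ne_of_gt (mul_pos hq0 hsμ0)
    apply mul_right_cancel₀ hne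
    rw [hcdef, mul_assoc, div_mul_cancel₀ _ hne]
    linear_combination (-q) * hsμsq
  have hnorm : ‖v - vs‖ = ‖w - v‖ := by rw [hwvs, norm_sub_rev]
  calc μ * (1 - L * η) * ‖v - vs‖ = μ * q * ‖w - v‖ := by rw [hnorm]
  _ ≤ μ * q * (c * s 0) := mul_le_mul_of_nonneg_left hlim (mul_pos hμ hq0).le
  _ = (μ * q * c) * s 0 := by ring
  _ = sμ * s 0 := by rw [hcval]
  _ ≤ ‖g v‖ := hs0le

/-- Under the μ-PL-in-T assumption, for every `θ` and every
`T ∈ L²(P)`, `‖∂_θL(θ,T) − ∂φ(θ)‖ ≤ κ ‖∂_TL(θ,T)‖_{L²(P)}`, where `κ = l/μ`,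
`l = l₀ + 1/γ`, and `∂φ(θ) = ∂_θL(θ,T*(θ)) = E_{x∼P}[∂_θℓ(θ,v*(θ;x))]`. -/
theorem grad_theta_gap_bound
    {d p : ℕ} (P : Measure (EuclideanSpace ℝ (Fin d))) [IsProbabilityMeasure P]
    (hP2 : Integrable (fun x => ‖x‖ ^ 2) P)
    (ℓ : EuclideanSpace ℝ (Fin p) → EuclideanSpace ℝ (Fin d) → ℝ)
    (gθ : EuclideanSpace ℝ (Fin p) → EuclideanSpace ℝ (Fin d) → EuclideanSpace ℝ (Fin p))
    (gv : EuclideanSpace ℝ (Fin p) → EuclideanSpace ℝ (Fin d) → EuclideanSpace ℝ (Fin d))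
    (l₀ γ μ : ℝ) (hl₀ : 0 ≤ l₀) (hγ : 0 < γ) (hμ : 0 < μ)
    (hgθ : ∀ θ v, HasGradientAt (fun θ' => ℓ θ' v) (gθ θ v) θ)
    (hgv : ∀ θ v, HasGradientAt (fun v' => ℓ θ v') (gv θ v) v)
    (hsmooth : ∀ θ v θ' v',
      Real.sqrt (‖gθ θ' v' - gθ θ v‖ ^ 2 + ‖gv θ' v' - gv θ v‖ ^ 2)
        ≤ l₀ * Real.sqrt (‖θ' - θ‖ ^ 2 + ‖v' - v‖ ^ 2))
    (vstar : EuclideanSpace ℝ (Fin p) → EuclideanSpace ℝ (Fin d) → EuclideanSpace ℝ (Fin d))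
    (hmax : ∀ θ, ∀ᵐ x ∂P, ∀ v,
      ℓ θ v - ‖v - x‖ ^ 2 / (2 * γ) ≤ ℓ θ (vstar θ x) - ‖vstar θ x - x‖ ^ 2 / (2 * γ))
    (huniq : ∀ θ, ∀ᵐ x ∂P, ∀ v,
      (∀ w, ℓ θ w - ‖w - x‖ ^ 2 / (2 * γ) ≤ ℓ θ v - ‖v - x‖ ^ 2 / (2 * γ)) → v = vstar θ x)
    (hPL : ∀ θ, ∀ᵐ x ∂P, ∀ v,
      μ * ((ℓ θ (vstar θ x) - ‖vstar θ x - x‖ ^ 2 / (2 * γ)) - (ℓ θ v - ‖v - x‖ ^ 2 / (2 * γ)))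
        ≤ (1 / 2) * ‖gv θ v - γ⁻¹ • (v - x)‖ ^ 2)
    (hvstar : ∀ θ, MemLp (vstar θ) 2 P) :
    ∀ θ, ∀ T : EuclideanSpace ℝ (Fin d) → EuclideanSpace ℝ (Fin d), MemLp T 2 P →
      ‖(∫ x, gθ θ (T x) ∂P) - (∫ x, gθ θ (vstar θ x) ∂P)‖
        ≤ ((l₀ + γ⁻¹) / μ)
            * Real.sqrt (∫ x, ‖gv θ (T x) - γ⁻¹ • (T x - x)‖ ^ 2 ∂P) := by
  intro θ T hT
  have hγi : 0 < γ⁻¹ := inv_pos.mpr hγ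
  set l : ℝ := l₀ + γ⁻¹ with hldef
  have hl : 0 < l := by positivity
  -- Lipschitz bounds on the partial gradients in v
  have hLθ : ∀ u w : EuclideanSpace ℝ (Fin d), ‖gθ θ u - gθ θ w‖ ≤ l₀ * ‖u - w‖ := by
    intro u w
    have h := hsmooth θ w θ u
    have h0 : ‖θ - θ‖ ^ 2 = 0 := by simp
    rw [h0, zero_add, Real.sqrt_sq (norm_nonneg _)] at h
    refine le_trans (Real.le_sqrt_of_sq_le ?_) h
    nlinarith [sq_nonneg ‖gv θ u - gv θ w‖]
  have hLv : ∀ u w : EuclideanSpace ℝ (Fin d), ‖gv θ u - gv θ w‖ ≤ l₀ * ‖u - w‖ := by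
    intro u w
    have h := hsmooth θ w θ u
    have h0 : ‖θ - θ‖ ^ 2 = 0 := by simp
    rw [h0, zero_add, Real.sqrt_sq (norm_nonneg _)] at h
    refine le_trans (Real.le_sqrt_of_sq_le ?_) h
    nlinarith [sq_nonneg ‖gθ θ u - gθ θ w‖]
  -- step size
  set η : ℝ := min (1/(2*l)) (min (1/(2*μ)) (γ⁻¹ / l^2)) with hηdef
  have hη0 : 0 < η := lt_min (by positivity) (lt_min (by positivity) (by positivity))
  have hηL : η ≤ 1/(2*l) := min_le_left _ _
  have hημ : η ≤ 1/(2*μ) := (min_le_right _ _).trans (min_le_left _ _)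
  have hηγ : η ≤ γ⁻¹ / l^2 := (min_le_right _ _).trans (min_le_right _ _)
  have hqbound : l₀ ≤ l * (1 - l*η) := by
    have h1 : l^2 * η ≤ γ⁻¹ := by
      calc l^2 * η ≤ l^2 * (γ⁻¹/l^2) :=
        mul_le_mul_of_nonneg_left hηγ (by positivity : (0:ℝ) ≤ l^2)
      _ = γ⁻¹ := by field_simp
    have h2 : l * (1 - l*η) = l - l^2*η := by ring
    rw [h2]
    calc l₀ = l - γ⁻¹ := by rw [hldef]; ring
    _ ≤ l - l^2*η := sub_le_sub_left h1 l
  set V := vstar θ with hVdef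
  set G : EuclideanSpace ℝ (Fin d) → EuclideanSpace ℝ (Fin d) :=
    fun x => gv θ (T x) - γ⁻¹ • (T x - x) with hGdef
  -- pointwise a.e. bound via the PL error bound
  have hae : ∀ᵐ x ∂P, ‖gθ θ (T x) - gθ θ (V x)‖ ≤ (l/μ) * ‖G x‖ := by
    filter_upwards [hmax θ, huniq θ, hPL θ] with x h1 h2 h3
    have hgrad : ∀ z : EuclideanSpace ℝ (Fin d),
        HasGradientAt (fun v' => ℓ θ v' - ‖v' - x‖^2/(2*γ)) (gv θ z - γ⁻¹ • (z - x)) z :=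
      fun z => my_hasGradientAt_comb x z hγ (hgv θ z)
    have hLip : ∀ z w : EuclideanSpace ℝ (Fin d),
        ‖(gv θ z - γ⁻¹ • (z - x)) - (gv θ w - γ⁻¹ • (w - x))‖ ≤ l * ‖z - w‖ := by
      intro z w
      have e : (gv θ z - γ⁻¹ • (z - x)) - (gv θ w - γ⁻¹ • (w - x))
          = (gv θ z - gv θ w) - γ⁻¹ • (z - w) := by
        rw [smul_sub, smul_sub, smul_sub]
        abel
      rw [e]
      calc ‖(gv θ z - gv θ w) - γ⁻¹ • (z - w)‖
          ≤ ‖gv θ z - gv θ w‖ + ‖γ⁻¹ • (z - w)‖ := norm_sub_le _ _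
      _ ≤ l₀ * ‖z - w‖ + γ⁻¹ * ‖z - w‖ := by
          rw [norm_smul, Real.norm_of_nonneg hγi.le]
          exact add_le_add (hLv z w) le_rfl
      _ = l * ‖z - w‖ := by rw [hldef]; ring
    have hkey := key_EB (f := fun v' => ℓ θ v' - ‖v' - x‖^2/(2*γ))
      (g := fun z => gv θ z - γ⁻¹ • (z - x)) hl hμ hη0 hηL hημ hgrad hLip
      (vs := V x) h1 h2 h3 (T x)
    have hd0 : (0:ℝ) ≤ ‖T x - V x‖ := norm_nonneg _
    have h6 := mul_le_mul_of_nonneg_left hkey (le_of_lt (div_pos hl hμ))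
    have h7 : (l/μ) * (μ * (1 - l*η) * ‖T x - V x‖) = l * (1-l*η) * ‖T x - V x‖ := by
      field_simp
    have h8 := mul_le_mul_of_nonneg_right hqbound hd0
    refine (hLθ (T x) (V x)).trans ?_
    calc l₀ * ‖T x - V x‖ ≤ l * (1 - l*η) * ‖T x - V x‖ := by linarith
    _ = (l/μ) * (μ * (1 - l*η) * ‖T x - V x‖) := h7.symm
    _ ≤ (l/μ) * ‖G x‖ := h6
  -- integrability facts
  have hTi : Integrable T P := hT.integrable one_le_two
  have hVm : MemLp V 2 P := hvstar θ
  have hVi : Integrable V P := hVm.integrable one_le_two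
  have hcontθ : Continuous (gθ θ) := by
    have hlip : LipschitzWith (Real.toNNReal l₀) (gθ θ) := by
      apply LipschitzWith.of_dist_le_mul
      intro u w
      rw [dist_eq_norm, dist_eq_norm]
      calc ‖gθ θ u - gθ θ w‖ ≤ l₀ * ‖u - w‖ := hLθ u w
      _ = (Real.toNNReal l₀) * ‖u - w‖ := by rw [Real.coe_toNNReal _ hl₀]
    exact hlip.continuous
  have hcontv : Continuous (gv θ) := by
    have hlip : LipschitzWith (Real.toNNReal l₀) (gv θ) := by
      apply LipschitzWith.of_dist_le_mul
      intro u w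
      rw [dist_eq_norm, dist_eq_norm]
      calc ‖gv θ u - gv θ w‖ ≤ l₀ * ‖u - w‖ := hLv u w
      _ = (Real.toNNReal l₀) * ‖u - w‖ := by rw [Real.coe_toNNReal _ hl₀]
    exact hlip.continuous
  have hIT : Integrable (fun x => gθ θ (T x)) P := by
    refine Integrable.mono' ((integrable_const ‖gθ θ 0‖).add (hTi.norm.const_mul l₀))
      (hcontθ.comp_aestronglyMeasurable hT.1) ?_
    filter_upwards with x
    have h10 := hLθ (T x) 0
    rw [sub_zero] at h10
    have h9 : ‖gθ θ (T x)‖ - ‖gθ θ 0‖ ≤ ‖gθ θ (T x) - gθ θ 0‖ := norm_sub_norm_le _ _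
    simp only [Pi.add_apply]
    linarith
  have hIV : Integrable (fun x => gθ θ (V x)) P := by
    refine Integrable.mono' ((integrable_const ‖gθ θ 0‖).add (hVi.norm.const_mul l₀))
      (hcontθ.comp_aestronglyMeasurable hVm.1) ?_
    filter_upwards with x
    have h10 := hLθ (V x) 0
    rw [sub_zero] at h10
    have h9 : ‖gθ θ (V x)‖ - ‖gθ θ 0‖ ≤ ‖gθ θ (V x) - gθ θ 0‖ := norm_sub_norm_le _ _
    simp only [Pi.add_apply]
    linarith
  have hDi : Integrable (fun x => gθ θ (T x) - gθ θ (V x)) P := hIT.sub hIV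
  have hid2 : MemLp (fun x : EuclideanSpace ℝ (Fin d) => x) 2 P :=
    (memLp_two_iff_integrable_sq_norm aestronglyMeasurable_id).mpr hP2
  have hgvT : MemLp (fun x => gv θ (T x)) 2 P := by
    have hbound : MemLp (fun x => ‖gv θ 0‖ + l₀ * ‖T x‖) 2 P :=
      by have h := (memLp_const (μ := P) (p := 2) ‖gv θ 0‖).add (hT.norm.const_mul l₀); exact h
    refine MemLp.of_le hbound (hcontv.comp_aestronglyMeasurable hT.1) ?_
    filter_upwards with x
    have h10 := hLv (T x) 0
    rw [sub_zero] at h10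
    have h9 : ‖gv θ (T x)‖ - ‖gv θ 0‖ ≤ ‖gv θ (T x) - gv θ 0‖ := norm_sub_norm_le _ _
    have h11 : ‖gv θ (T x)‖ ≤ ‖gv θ 0‖ + l₀ * ‖T x‖ := by linarith
    calc ‖gv θ (T x)‖ ≤ ‖gv θ 0‖ + l₀ * ‖T x‖ := h11
    _ ≤ ‖‖gv θ 0‖ + l₀ * ‖T x‖‖ := le_abs_self _
  have hTid : MemLp (fun x => T x - x) 2 P := hT.sub hid2
  have hGm : MemLp G 2 P := hgvT.sub (hTid.const_smul γ⁻¹)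
  have hG1 : Integrable (fun x => ‖G x‖) P := (hGm.integrable one_le_two).norm
  have hG2 : Integrable (fun x => ‖G x‖^2) P :=
    (memLp_two_iff_integrable_sq_norm hGm.aestronglyMeasurable).mp hGm
  -- Cauchy–Schwarz on a probability measure
  have hCS : (∫ x, ‖G x‖ ∂P) ≤ Real.sqrt (∫ x, ‖G x‖^2 ∂P) := by
    have hnormmem : MemLp (fun x => ‖G x‖) 2 P := hGm.norm
    have hvar := ProbabilityTheory.variance_nonneg (fun x => ‖G x‖) P
    rw [ProbabilityTheory.variance_eq_sub hnormmem] at hvar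
    have he : (∫ x, ((fun x => ‖G x‖)^2) x ∂P) = ∫ x, ‖G x‖^2 ∂P := by
      apply integral_congr_ae
      filter_upwards with x
      simp
    rw [Real.le_sqrt (integral_nonneg (fun x => norm_nonneg _)) (integral_nonneg (fun x => sq_nonneg _))]
    calc (∫ x, ‖G x‖ ∂P)^2 ≤ ∫ x, ((fun x => ‖G x‖)^2) x ∂P := by linarith [hvar]
    _ = ∫ x, ‖G x‖^2 ∂P := he
  have hmain : ‖(∫ x, gθ θ (T x) ∂P) - ∫ x, gθ θ (V x) ∂P‖ ≤ (l/μ) * ∫ x, ‖G x‖ ∂P := by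
    rw [← integral_sub hIT hIV]
    calc ‖∫ x, (gθ θ (T x) - gθ θ (V x)) ∂P‖
        ≤ ∫ x, ‖gθ θ (T x) - gθ θ (V x)‖ ∂P := norm_integral_le_integral_norm _
    _ ≤ ∫ x, (l/μ) * ‖G x‖ ∂P := integral_mono_ae hDi.norm (hG1.const_mul _) hae
    _ = (l/μ) * ∫ x, ‖G x‖ ∂P := integral_const_mul _ _
  calc ‖(∫ x, gθ θ (T x) ∂P) - ∫ x, gθ θ (V x) ∂P‖ ≤ (l/μ) * ∫ x, ‖G x‖ ∂P := hmain
  _ ≤ (l/μ) * Real.sqrt (∫ x, ‖G x‖^2 ∂P) :=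
      mul_le_mul_of_nonneg_left hCS (by positivity)
end
end

section
/- (Primal descent of one GDA step.) Suppose the step sizes satisfy l·η ≤ 1 and l·τ ≤ 1/2. If (θ', T') is obtained from (θ,T) by one GDA step θ' = θ − τ ∂_θL(θ,T), T' = T + η ∂_TL(θ,T), then L(θ',T') − L(θ,T) ≥ (η/4)‖∂_TL(θ,T)‖²_{L²(P)} − (7τ/4)‖∂_θL(θ,T)‖². -/
open MeasureTheory intervalIntegral
open scoped RealInnerProductSpace

noncomputable section

lemma descent_lemma_s9 {E : Type*} [NormedAddCommGroup E] [InnerProductSpace ℝ E] [CompleteSpace E]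
    (f : E → ℝ) (g : E → E) (C : ℝ) (hC : 0 ≤ C)
    (hg : ∀ y, HasGradientAt f (g y) y)
    (hlip : ∀ y z, ‖g y - g z‖ ≤ C * ‖y - z‖) (a b : E) :
    f a + ⟪g a, b - a⟫ - C / 2 * ‖b - a‖ ^ 2 ≤ f b := by
  set ψ : ℝ → E := fun t => a + t • (b - a) with hψdef
  have hψd : ∀ t : ℝ, HasDerivAt ψ (b - a) t := fun t => by
    exact (((hasDerivAt_id t).smul_const (b - a)).const_add a).congr_deriv (one_smul _ _)
  have hφd : ∀ t : ℝ, HasDerivAt (fun s => f (ψ s)) ⟪g (ψ t), b - a⟫ t := by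
    intro t
    have h1 := (hg (ψ t)).hasFDerivAt.comp_hasDerivAt t (hψd t)
    exact (h1 : HasDerivAt (fun s => f (ψ s)) _ t).congr_deriv (by simp [InnerProductSpace.toDual_apply_apply])
  have hgc : Continuous g := by
    have : LipschitzWith C.toNNReal g := by
      apply LipschitzWith.of_dist_le_mul
      intro y z
      rw [dist_eq_norm, dist_eq_norm, Real.coe_toNNReal C hC]
      exact hlip y z
    exact this.continuous
  have hcont : Continuous fun t => ⟪g (ψ t), b - a⟫ := by
    apply Continuous.inner (hgc.comp (by continuity)) continuous_const
  have hFTC : ∫ t in (0:ℝ)..1, ⟪g (ψ t), b - a⟫ = f (ψ 1) - f (ψ 0) :=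
    integral_eq_sub_of_hasDerivAt (fun t _ => hφd t) (hcont.intervalIntegrable 0 1)
  have hψ0 : ψ 0 = a := by simp [hψdef]
  have hψ1 : ψ 1 = b := by simp [hψdef]
  have hbound : ∀ t ∈ Set.Icc (0:ℝ) 1,
      ⟪g a, b - a⟫ - C * ‖b - a‖ ^ 2 * t ≤ ⟪g (ψ t), b - a⟫ := by
    intro t ht
    have h1 : ⟪g (ψ t), b - a⟫ - ⟪g a, b - a⟫ = ⟪g (ψ t) - g a, b - a⟫ := by
      rw [inner_sub_left]
    have h2 : |⟪g (ψ t) - g a, b - a⟫| ≤ ‖g (ψ t) - g a‖ * ‖b - a‖ :=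
      abs_real_inner_le_norm _ _
    have h3 : ‖g (ψ t) - g a‖ ≤ C * (t * ‖b - a‖) := by
      have := hlip (ψ t) a
      simpa [hψdef, norm_smul, abs_of_nonneg ht.1] using this
    have h4 : ‖g (ψ t) - g a‖ * ‖b - a‖ ≤ C * ‖b - a‖ ^ 2 * t := by
      calc ‖g (ψ t) - g a‖ * ‖b - a‖ ≤ (C * (t * ‖b - a‖)) * ‖b - a‖ :=
            mul_le_mul_of_nonneg_right h3 (norm_nonneg _)
        _ = C * ‖b - a‖ ^ 2 * t := by ring
    nlinarith [neg_abs_le ⟪g (ψ t) - g a, b - a⟫]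
  have hint : (∫ t in (0:ℝ)..1, (⟪g a, b - a⟫ - C * ‖b - a‖ ^ 2 * t))
      ≤ ∫ t in (0:ℝ)..1, ⟪g (ψ t), b - a⟫ := by
    apply integral_mono_on zero_le_one _ (hcont.intervalIntegrable 0 1) hbound
    exact (by continuity : Continuous fun t : ℝ => ⟪g a, b - a⟫ - C * ‖b - a‖ ^ 2 * t).intervalIntegrable 0 1
  have hval : (∫ t in (0:ℝ)..1, (⟪g a, b - a⟫ - C * ‖b - a‖ ^ 2 * t))
      = ⟪g a, b - a⟫ - C / 2 * ‖b - a‖ ^ 2 := by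
    rw [integral_sub (intervalIntegrable_const) (by
      simpa using (intervalIntegral.intervalIntegrable_id.const_mul (C * ‖b - a‖ ^ 2))),
      intervalIntegral.integral_const, intervalIntegral.integral_const_mul, integral_id]
    simp; ring
  rw [hψ0, hψ1] at hFTC
  linarith [hint.trans_eq hFTC, hval]

lemma descent_abs {E : Type*} [NormedAddCommGroup E] [InnerProductSpace ℝ E] [CompleteSpace E]
    (f : E → ℝ) (g : E → E) (C : ℝ) (hC : 0 ≤ C)
    (hg : ∀ y, HasGradientAt f (g y) y)
    (hlip : ∀ y z, ‖g y - g z‖ ≤ C * ‖y - z‖) (a b : E) :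
    |f b - f a| ≤ ‖g a‖ * ‖b - a‖ + 3 * C / 2 * ‖b - a‖ ^ 2 := by
  have h1 := descent_lemma_s9 f g C hC hg hlip a b
  have h2 := descent_lemma_s9 f g C hC hg hlip b a
  have h3 : |⟪g a, b - a⟫| ≤ ‖g a‖ * ‖b - a‖ := abs_real_inner_le_norm _ _
  have h4 : |⟪g b, a - b⟫| ≤ ‖g b‖ * ‖a - b‖ := abs_real_inner_le_norm _ _
  have h5 : ‖g b‖ ≤ ‖g a‖ + C * ‖b - a‖ := by
    have hn : ‖g b‖ ≤ ‖g a‖ + ‖g b - g a‖ := by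
      simpa using norm_add_le (g a) (g b - g a)
    have := hlip b a
    linarith
  have h6 : ‖a - b‖ = ‖b - a‖ := norm_sub_rev a b
  rw [h6] at h4 h2
  have h7 : ‖g b‖ * ‖b - a‖ ≤ (‖g a‖ + C * ‖b - a‖) * ‖b - a‖ :=
    mul_le_mul_of_nonneg_right h5 (norm_nonneg _)
  rw [abs_le] at *
  constructor <;> nlinarith [norm_nonneg (b - a), sq_nonneg ‖b - a‖]

lemma pointwise_descent {Θ E : Type*}
    [NormedAddCommGroup Θ] [InnerProductSpace ℝ Θ] [CompleteSpace Θ]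
    [NormedAddCommGroup E] [InnerProductSpace ℝ E] [CompleteSpace E]
    (ℓ : Θ → E → ℝ) (gθ : Θ → E → Θ) (gv : Θ → E → E) (l₀ c : ℝ)
    (hl₀ : 0 ≤ l₀) (hc : 0 ≤ c)
    (hgθ : ∀ θ v, HasGradientAt (fun θ' => ℓ θ' v) (gθ θ v) θ)
    (hgv : ∀ θ v, HasGradientAt (fun v' => ℓ θ v') (gv θ v) v)
    (hθlip : ∀ v θ θ', ‖gθ θ' v - gθ θ v‖ ≤ l₀ * ‖θ' - θ‖)
    (hvlip : ∀ θ v v', ‖gv θ v' - gv θ v‖ ≤ l₀ * ‖v' - v‖)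
    (hcross : ∀ θ v v', ‖gθ θ v' - gθ θ v‖ ≤ l₀ * ‖v' - v‖)
    (x : E) (θ : Θ) (v : E) (Δθ : Θ) (Δv : E) :
    ℓ θ v - c / 2 * ‖v - x‖ ^ 2 + ⟪gθ θ v, Δθ⟫ + ⟪gv θ v - c • (v - x), Δv⟫
      - 3 * (l₀ + c) / 4 * ‖Δv‖ ^ 2 - 3 * (l₀ + c) / 2 * ‖Δθ‖ ^ 2
    ≤ ℓ (θ + Δθ) (v + Δv) - c / 2 * ‖v + Δv - x‖ ^ 2 := by
  have hquad : ∀ w : E, HasGradientAt (fun w => c / 2 * ‖w - x‖ ^ 2) (c • (w - x)) w := by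
    intro w
    rw [hasGradientAt_iff_hasFDerivAt]
    have h1 := ((hasFDerivAt_id w).sub_const x).norm_sq
    have h2 := h1.const_mul (c / 2)
    convert h2 using 1
    · rfl
    · rfl
    ext y
    simp [InnerProductSpace.toDual_apply_apply, real_inner_smul_left,
      ContinuousLinearMap.smul_apply, inner_sub_left]
    ring
  have hfv : ∀ w : E, HasGradientAt (fun w => ℓ θ w - c / 2 * ‖w - x‖ ^ 2)
      (gv θ w - c • (w - x)) w := by
    intro w
    rw [hasGradientAt_iff_hasFDerivAt]
    have := ((hgv θ w).hasFDerivAt).sub ((hquad w).hasFDerivAt)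
    rw [map_sub]; exact this
  have hglip : ∀ w w' : E, ‖(gv θ w - c • (w - x)) - (gv θ w' - c • (w' - x))‖
      ≤ (l₀ + c) * ‖w - w'‖ := by
    intro w w'
    have he : (gv θ w - c • (w - x)) - (gv θ w' - c • (w' - x))
        = (gv θ w - gv θ w') - c • (w - w') := by
      rw [smul_sub, smul_sub, smul_sub]; abel
    rw [he]
    calc ‖(gv θ w - gv θ w') - c • (w - w')‖ ≤ ‖gv θ w - gv θ w'‖ + ‖c • (w - w')‖ :=
          norm_sub_le _ _
      _ ≤ l₀ * ‖w - w'‖ + c * ‖w - w'‖ := by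
          have := hvlip θ w' w
          have hs : ‖c • (w - w')‖ = c * ‖w - w'‖ := by
            rw [norm_smul, Real.norm_eq_abs, abs_of_nonneg hc]
          linarith
      _ = (l₀ + c) * ‖w - w'‖ := by ring
  have h_v := descent_lemma_s9 (fun w => ℓ θ w - c / 2 * ‖w - x‖ ^ 2)
      (fun w => gv θ w - c • (w - x)) (l₀ + c) (by linarith) hfv
      (fun y z => hglip y z) v (v + Δv)
  have h_θ := descent_lemma_s9 (fun θ'' => ℓ θ'' (v + Δv)) (fun θ'' => gθ θ'' (v + Δv)) l₀ hl₀
      (fun y => hgθ y (v + Δv)) (fun y z => hθlip (v + Δv) z y) θ (θ + Δθ)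
  simp only [add_sub_cancel_left] at h_v h_θ
  have h_c : ⟪gθ θ v, Δθ⟫ - (l₀ / 4 * ‖Δv‖ ^ 2 + l₀ * ‖Δθ‖ ^ 2) ≤ ⟪gθ θ (v + Δv), Δθ⟫ := by
    have he : ⟪gθ θ (v + Δv), Δθ⟫ - ⟪gθ θ v, Δθ⟫ = ⟪gθ θ (v + Δv) - gθ θ v, Δθ⟫ :=
      (inner_sub_left _ _ _).symm
    have h2 : |⟪gθ θ (v + Δv) - gθ θ v, Δθ⟫| ≤ ‖gθ θ (v + Δv) - gθ θ v‖ * ‖Δθ‖ :=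
      abs_real_inner_le_norm _ _
    have h3 : ‖gθ θ (v + Δv) - gθ θ v‖ ≤ l₀ * ‖Δv‖ := by
      have := hcross θ v (v + Δv)
      simpa using this
    have h4 : ‖gθ θ (v + Δv) - gθ θ v‖ * ‖Δθ‖ ≤ l₀ * ‖Δv‖ * ‖Δθ‖ :=
      mul_le_mul_of_nonneg_right h3 (norm_nonneg _)
    have h5 : l₀ * ‖Δv‖ * ‖Δθ‖ ≤ l₀ / 4 * ‖Δv‖ ^ 2 + l₀ * ‖Δθ‖ ^ 2 := by
      nlinarith [sq_nonneg (‖Δv‖ - 2 * ‖Δθ‖), mul_nonneg (mul_nonneg hl₀ (norm_nonneg Δv)) (norm_nonneg Δθ)]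
    nlinarith [neg_abs_le ⟪gθ θ (v + Δv) - gθ θ v, Δθ⟫]
  nlinarith [mul_nonneg hc (sq_nonneg ‖Δv‖), mul_nonneg hc (sq_nonneg ‖Δθ‖)]

lemma memℒp_comp_lip {α E F : Type*} [MeasurableSpace α] {μ : Measure α} [IsFiniteMeasure μ]
    [NormedAddCommGroup E] [NormedAddCommGroup F]
    (g : E → F) (K : ℝ) (hK : 0 ≤ K) (hg : ∀ v w, ‖g v - g w‖ ≤ K * ‖v - w‖)
    (T : α → E) (hT : MemLp T 2 μ) : MemLp (fun x => g (T x)) 2 μ := by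
  have hgc : Continuous g := by
    have : LipschitzWith K.toNNReal g := by
      apply LipschitzWith.of_dist_le_mul
      intro v w
      rw [dist_eq_norm, dist_eq_norm, Real.coe_toNNReal K hK]
      exact hg v w
    exact this.continuous
  have hbound : MemLp (fun x => ‖g 0‖ + K * ‖T x‖) 2 μ :=
    (memLp_const (‖g 0‖)).add (hT.norm.const_mul K)
  apply hbound.of_le (hgc.comp_aestronglyMeasurable hT.aestronglyMeasurable)
  filter_upwards with x
  have h2 : ‖g (T x)‖ ≤ ‖g 0‖ + ‖g (T x) - g 0‖ := by
    simpa using norm_add_le (g 0) (g (T x) - g 0)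
  have h3 : ‖g (T x) - g 0‖ ≤ K * ‖T x‖ := by simpa using hg (T x) 0
  have h4 : (0:ℝ) ≤ ‖g 0‖ + K * ‖T x‖ := by positivity
  rw [Real.norm_eq_abs, abs_of_nonneg h4]
  linarith

set_option maxHeartbeats 1000000 in
/-- (Primal descent of one GDA step.) If `l·η ≤ 1` and `l·τ ≤ 1/2`
with `l = l₀ + 1/γ`, and `(θ', T')` is obtained from `(θ,T)` by one GDA step
`θ' = θ − τ ∂_θL(θ,T)`, `T' = T + η ∂_TL(θ,T)`, then
`L(θ',T') − L(θ,T) ≥ (η/4)‖∂_TL(θ,T)‖²_{L²(P)} − (7τ/4)‖∂_θL(θ,T)‖²`. -/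
theorem primal_descent_one_gda_step
    {d p : ℕ} (P : Measure (EuclideanSpace ℝ (Fin d))) [IsProbabilityMeasure P]
    (hP2 : Integrable (fun x => ‖x‖ ^ 2) P)
    (ℓ : EuclideanSpace ℝ (Fin p) → EuclideanSpace ℝ (Fin d) → ℝ)
    (gθ : EuclideanSpace ℝ (Fin p) → EuclideanSpace ℝ (Fin d) → EuclideanSpace ℝ (Fin p))
    (gv : EuclideanSpace ℝ (Fin p) → EuclideanSpace ℝ (Fin d) → EuclideanSpace ℝ (Fin d))
    (l₀ γ : ℝ) (hl₀ : 0 ≤ l₀) (hγ : 0 < γ)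
    (hgθ : ∀ θ v, HasGradientAt (fun θ' => ℓ θ' v) (gθ θ v) θ)
    (hgv : ∀ θ v, HasGradientAt (fun v' => ℓ θ v') (gv θ v) v)
    (hsmooth : ∀ θ v θ' v',
      Real.sqrt (‖gθ θ' v' - gθ θ v‖ ^ 2 + ‖gv θ' v' - gv θ v‖ ^ 2)
        ≤ l₀ * Real.sqrt (‖θ' - θ‖ ^ 2 + ‖v' - v‖ ^ 2))
    (η τ : ℝ) (hηpos : 0 < η) (hτpos : 0 < τ)
    (hη : (l₀ + γ⁻¹) * η ≤ 1) (hτ : (l₀ + γ⁻¹) * τ ≤ 1 / 2)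
    (θ : EuclideanSpace ℝ (Fin p))
    (T : EuclideanSpace ℝ (Fin d) → EuclideanSpace ℝ (Fin d)) (hT : MemLp T 2 P)
    (θ' : EuclideanSpace ℝ (Fin p)) (hθ' : θ' = θ - τ • (∫ x, gθ θ (T x) ∂P))
    (T' : EuclideanSpace ℝ (Fin d) → EuclideanSpace ℝ (Fin d))
    (hT'def : T' = fun x => T x + η • (gv θ (T x) - γ⁻¹ • (T x - x))) :
    (η / 4) * (∫ x, ‖gv θ (T x) - γ⁻¹ • (T x - x)‖ ^ 2 ∂P)
        - (7 * τ / 4) * ‖∫ x, gθ θ (T x) ∂P‖ ^ 2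
      ≤ (∫ x, (ℓ θ' (T' x) - ‖T' x - x‖ ^ 2 / (2 * γ)) ∂P)
        - ∫ x, (ℓ θ (T x) - ‖T x - x‖ ^ 2 / (2 * γ)) ∂P := by
  have hγi : (0:ℝ) ≤ γ⁻¹ := by positivity
  have hl : (0:ℝ) ≤ l₀ + γ⁻¹ := by positivity
  -- Lipschitz consequences of hsmooth
  have hθlip : ∀ v θ₁ θ₂, ‖gθ θ₂ v - gθ θ₁ v‖ ≤ l₀ * ‖θ₂ - θ₁‖ := by
    intro v θ₁ θ₂
    have h := hsmooth θ₁ v θ₂ v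
    have h2 : Real.sqrt (‖θ₂ - θ₁‖ ^ 2 + ‖v - v‖ ^ 2) = ‖θ₂ - θ₁‖ := by
      simp [Real.sqrt_sq (norm_nonneg _)]
    rw [h2] at h
    refine le_trans ?_ h
    have h4 := Real.sqrt_le_sqrt (show ‖gθ θ₂ v - gθ θ₁ v‖ ^ 2
        ≤ ‖gθ θ₂ v - gθ θ₁ v‖ ^ 2 + ‖gv θ₂ v - gv θ₁ v‖ ^ 2 from
        le_add_of_nonneg_right (by positivity))
    rwa [Real.sqrt_sq (norm_nonneg _)] at h4
  have hvlip : ∀ θ₁ v v', ‖gv θ₁ v' - gv θ₁ v‖ ≤ l₀ * ‖v' - v‖ := by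
    intro θ₁ v v'
    have h := hsmooth θ₁ v θ₁ v'
    have h2 : Real.sqrt (‖θ₁ - θ₁‖ ^ 2 + ‖v' - v‖ ^ 2) = ‖v' - v‖ := by
      simp [Real.sqrt_sq (norm_nonneg _)]
    rw [h2] at h
    refine le_trans ?_ h
    have h4 := Real.sqrt_le_sqrt (show ‖gv θ₁ v' - gv θ₁ v‖ ^ 2
        ≤ ‖gθ θ₁ v' - gθ θ₁ v‖ ^ 2 + ‖gv θ₁ v' - gv θ₁ v‖ ^ 2 from
        le_add_of_nonneg_left (by positivity))
    rwa [Real.sqrt_sq (norm_nonneg _)] at h4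
  have hcross : ∀ θ₁ v v', ‖gθ θ₁ v' - gθ θ₁ v‖ ≤ l₀ * ‖v' - v‖ := by
    intro θ₁ v v'
    have h := hsmooth θ₁ v θ₁ v'
    have h2 : Real.sqrt (‖θ₁ - θ₁‖ ^ 2 + ‖v' - v‖ ^ 2) = ‖v' - v‖ := by
      simp [Real.sqrt_sq (norm_nonneg _)]
    rw [h2] at h
    refine le_trans ?_ h
    have h4 := Real.sqrt_le_sqrt (show ‖gθ θ₁ v' - gθ θ₁ v‖ ^ 2
        ≤ ‖gθ θ₁ v' - gθ θ₁ v‖ ^ 2 + ‖gv θ₁ v' - gv θ₁ v‖ ^ 2 from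
        le_add_of_nonneg_right (by positivity))
    rwa [Real.sqrt_sq (norm_nonneg _)] at h4
  set G := ∫ x, gθ θ (T x) ∂P with hG
  set D : EuclideanSpace ℝ (Fin d) → EuclideanSpace ℝ (Fin d) :=
    fun x => gv θ (T x) - γ⁻¹ • (T x - x) with hD
  -- integrability
  have hid : MemLp (fun x : EuclideanSpace ℝ (Fin d) => x) 2 P :=
    (memLp_two_iff_integrable_sq_norm aestronglyMeasurable_id).2 (by simpa using hP2)
  have hgθT2 : MemLp (fun x => gθ θ (T x)) 2 P :=
    memℒp_comp_lip (gθ θ) l₀ hl₀ (fun v w => hcross θ w v) T hT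
  have hgθT : Integrable (fun x => gθ θ (T x)) P := hgθT2.integrable one_le_two
  have hgvT2 : MemLp (fun x => gv θ (T x)) 2 P :=
    memℒp_comp_lip (gv θ) l₀ hl₀ (fun v w => hvlip θ w v) T hT
  have hD2 : MemLp D 2 P := hgvT2.sub ((hT.sub hid).const_smul γ⁻¹)
  have hDsq : Integrable (fun x => ‖D x‖ ^ 2) P := hD2.norm.integrable_sq
  have hinner : Integrable (fun x => ⟪gθ θ (T x), G⟫) P := hgθT.inner_const G
  have habs : ∀ (θ₀ : EuclideanSpace ℝ (Fin p)) (v : EuclideanSpace ℝ (Fin d)),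
      |ℓ θ₀ v - ℓ θ₀ 0| ≤ ‖gv θ₀ 0‖ * ‖v‖ + 3 * l₀ / 2 * ‖v‖ ^ 2 := by
    intro θ₀ v
    have := descent_abs (fun w => ℓ θ₀ w) (fun w => gv θ₀ w) l₀ hl₀ (hgv θ₀)
      (fun y z => hvlip θ₀ z y) 0 v
    simpa using this
  have hℓc : ∀ θ₀ : EuclideanSpace ℝ (Fin p), Continuous (fun v => ℓ θ₀ v) :=
    fun θ₀ => continuous_iff_continuousAt.2 fun v => (hgv θ₀ v).continuousAt
  have hint_l : ∀ (θ₀ : EuclideanSpace ℝ (Fin p))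
      (S : EuclideanSpace ℝ (Fin d) → EuclideanSpace ℝ (Fin d)), MemLp S 2 P →
      Integrable (fun x => ℓ θ₀ (S x)) P := by
    intro θ₀ S hS
    have hSn : Integrable (fun x => ‖S x‖) P := (hS.integrable one_le_two).norm
    have hSsq : Integrable (fun x => ‖S x‖ ^ 2) P := hS.norm.integrable_sq
    have hb : Integrable (fun x => |ℓ θ₀ 0| + (‖gv θ₀ 0‖ * ‖S x‖ + 3 * l₀ / 2 * ‖S x‖ ^ 2)) P :=
      (integrable_const _).add ((hSn.const_mul _).add (hSsq.const_mul _))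
    apply hb.mono' ((hℓc θ₀).comp_aestronglyMeasurable hS.aestronglyMeasurable)
    filter_upwards with x
    have h1 := habs θ₀ (S x)
    have h2 : |ℓ θ₀ (S x)| ≤ |ℓ θ₀ 0| + |ℓ θ₀ (S x) - ℓ θ₀ 0| := by
      calc |ℓ θ₀ (S x)| = |ℓ θ₀ 0 + (ℓ θ₀ (S x) - ℓ θ₀ 0)| := by ring_nf
        _ ≤ |ℓ θ₀ 0| + |ℓ θ₀ (S x) - ℓ θ₀ 0| := abs_add_le _ _
    rw [Real.norm_eq_abs]
    linarith
  have hquadInt : ∀ (S : EuclideanSpace ℝ (Fin d) → EuclideanSpace ℝ (Fin d)), MemLp S 2 P →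
      Integrable (fun x => ‖S x - x‖ ^ 2 / (2 * γ)) P :=
    fun S hS => ((hS.sub hid).norm.integrable_sq).div_const _
  have hA : Integrable (fun x => ℓ θ (T x) - ‖T x - x‖ ^ 2 / (2 * γ)) P :=
    (hint_l θ T hT).sub (hquadInt T hT)
  have hT'2 : MemLp T' 2 P := by
    rw [hT'def]
    exact hT.add (hD2.const_smul η)
  have hA' : Integrable (fun x => ℓ θ' (T' x) - ‖T' x - x‖ ^ 2 / (2 * γ)) P :=
    (hint_l θ' T' hT'2).sub (hquadInt T' hT'2)
  -- pointwise inequality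
  have key : ∀ x, (-τ) * ⟪gθ θ (T x), G⟫
        + (η - 3 * (l₀ + γ⁻¹) / 4 * η ^ 2) * ‖D x‖ ^ 2
        - 3 * (l₀ + γ⁻¹) / 2 * τ ^ 2 * ‖G‖ ^ 2
      ≤ (ℓ θ' (T' x) - ‖T' x - x‖ ^ 2 / (2 * γ))
        - (ℓ θ (T x) - ‖T x - x‖ ^ 2 / (2 * γ)) := by
    intro x
    have hp := pointwise_descent ℓ gθ gv l₀ γ⁻¹ hl₀ hγi hgθ hgv hθlip hvlip hcross
      x θ (T x) ((-τ) • G) (η • D x)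
    have e1 : θ + (-τ) • G = θ' := by rw [hθ', neg_smul, ← sub_eq_add_neg]
    have e2 : T x + η • D x = T' x := by rw [hT'def]
    rw [e1, e2] at hp
    have e3 : ⟪gθ θ (T x), (-τ) • G⟫ = (-τ) * ⟪gθ θ (T x), G⟫ := real_inner_smul_right _ _ _
    have e4 : ⟪gv θ (T x) - γ⁻¹ • (T x - x), η • D x⟫ = η * ‖D x‖ ^ 2 := by
      rw [real_inner_smul_right]
      have hDx : gv θ (T x) - γ⁻¹ • (T x - x) = D x := rfl
      rw [hDx, real_inner_self_eq_norm_sq]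
    have e5 : ‖η • D x‖ ^ 2 = η ^ 2 * ‖D x‖ ^ 2 := by
      rw [norm_smul, Real.norm_eq_abs, abs_of_pos hηpos, mul_pow]
    have e6 : ‖(-τ) • G‖ ^ 2 = τ ^ 2 * ‖G‖ ^ 2 := by
      rw [norm_smul, Real.norm_eq_abs, abs_neg, abs_of_pos hτpos, mul_pow]
    have e7 : ∀ w : ℝ, w / (2 * γ) = γ⁻¹ / 2 * w := by
      intro w; rw [div_eq_mul_inv, mul_inv]; ring
    rw [e3, e4, e5, e6] at hp
    rw [e7, e7]
    ring_nf at hp ⊢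
    linarith [hp]
  have hR : Integrable (fun x => (-τ) * ⟪gθ θ (T x), G⟫
      + (η - 3 * (l₀ + γ⁻¹) / 4 * η ^ 2) * ‖D x‖ ^ 2
      - 3 * (l₀ + γ⁻¹) / 2 * τ ^ 2 * ‖G‖ ^ 2) P :=
    ((hinner.const_mul _).add (hDsq.const_mul _)).sub (integrable_const _)
  have hmono : (∫ x, ((-τ) * ⟪gθ θ (T x), G⟫
      + (η - 3 * (l₀ + γ⁻¹) / 4 * η ^ 2) * ‖D x‖ ^ 2
      - 3 * (l₀ + γ⁻¹) / 2 * τ ^ 2 * ‖G‖ ^ 2) ∂P)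
      ≤ (∫ x, (ℓ θ' (T' x) - ‖T' x - x‖ ^ 2 / (2 * γ)) ∂P)
        - ∫ x, (ℓ θ (T x) - ‖T x - x‖ ^ 2 / (2 * γ)) ∂P := by
    rw [← integral_sub hA' hA]
    exact integral_mono hR (hA'.sub hA) key
  have hGint : ∫ x, ⟪gθ θ (T x), G⟫ ∂P = ‖G‖ ^ 2 := by
    have hc : ∀ x, ⟪gθ θ (T x), G⟫ = ⟪G, gθ θ (T x)⟫ := fun x => real_inner_comm _ _
    simp_rw [hc]
    rw [integral_inner hgθT G, ← hG]
    exact real_inner_self_eq_norm_sq G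
  have hRval : ∫ x, ((-τ) * ⟪gθ θ (T x), G⟫
      + (η - 3 * (l₀ + γ⁻¹) / 4 * η ^ 2) * ‖D x‖ ^ 2
      - 3 * (l₀ + γ⁻¹) / 2 * τ ^ 2 * ‖G‖ ^ 2) ∂P
      = (-τ) * ‖G‖ ^ 2 + (η - 3 * (l₀ + γ⁻¹) / 4 * η ^ 2) * (∫ x, ‖D x‖ ^ 2 ∂P)
        - 3 * (l₀ + γ⁻¹) / 2 * τ ^ 2 * ‖G‖ ^ 2 := by
    have hi2 : Integrable (fun x => (-τ) * ⟪gθ θ (T x), G⟫) P := hinner.const_mul _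
    have hi3 : Integrable (fun x =>
        (η - 3 * (l₀ + γ⁻¹) / 4 * η ^ 2) * ‖D x‖ ^ 2) P := hDsq.const_mul _
    have hi1 : Integrable (fun x => (-τ) * ⟪gθ θ (T x), G⟫
        + (η - 3 * (l₀ + γ⁻¹) / 4 * η ^ 2) * ‖D x‖ ^ 2) P := hi2.add hi3
    rw [integral_sub hi1 (integrable_const _), integral_add hi2 hi3,
      MeasureTheory.integral_const_mul, MeasureTheory.integral_const_mul, MeasureTheory.integral_const, hGint]
    simp
  rw [hRval] at hmono
  have hID : (0:ℝ) ≤ ∫ x, ‖D x‖ ^ 2 ∂P := integral_nonneg fun x => by positivity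
  have hG2 : (0:ℝ) ≤ ‖G‖ ^ 2 := sq_nonneg _
  nlinarith [hmono, mul_nonneg (mul_nonneg hηpos.le (sub_nonneg.2 hη)) hID,
    mul_nonneg (mul_nonneg hτpos.le (by linarith : (0:ℝ) ≤ 1 / 2 - (l₀ + γ⁻¹) * τ)) hG2]
end
end
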